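/- arXiv:1701.07286 — 7 statements merged into one kernel-verified Lean document; each statement's English description precedes it below -/
import Mathlib

section
/- Let $m \geq 1$ be an integer, $A \subseteq \mathbb{R}^m$, $a \in \mathbb{R}^m$, $f : A \to \mathbb{R}^{n-m}$, $\gamma \geq 1$, $0 < M < \infty$ and $0 \leq \lambda < \infty$. If $\limsup_{r \to 0^+} \frac{\mathcal{L}^m(\mathbf{B}(a,r) \cap \{x : |f(x)| > \lambda r^\gamma\})}{\alpha(m) r^m} < M$, then $\limsup_{r\to 0^+} \frac{\mathcal{L}^m(\mathbf{B}(a,r) \cap \{x : |f(x)| > 2^\gamma \lambda |x-a|^\gamma\})}{\alpha(m) r^m} < M (1-2^{-m})^{-1}$. -/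
open MeasureTheory Metric Filter Set
open scoped ENNReal Topology

/-- Volume of the unit ball in `ℝ^m`, i.e. `α(m)`. -/
noncomputable def ballVol (m : ℕ) : ℝ≥0∞ :=
  volume (Metric.closedBall (0 : EuclideanSpace ℝ (Fin m)) 1)

theorem stmt0 {m : ℕ} (hm : 1 ≤ m) {F : Type*} [NormedAddCommGroup F]
    (A : Set (EuclideanSpace ℝ (Fin m))) (a : EuclideanSpace ℝ (Fin m))
    (f : EuclideanSpace ℝ (Fin m) → F) (γ : ℝ) (hγ : 1 ≤ γ)
    (M : ℝ) (hM : 0 < M) (lam : ℝ) (hlam : 0 ≤ lam)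
    (h : Filter.limsup (fun r : ℝ =>
        volume ({x | x ∈ A ∧ lam * r ^ γ < ‖f x‖} ∩ Metric.closedBall a r) /
          (ballVol m * ENNReal.ofReal (r ^ m))) (𝓝[>] (0 : ℝ))
        < ENNReal.ofReal M) :
    Filter.limsup (fun r : ℝ =>
        volume ({x | x ∈ A ∧ (2 : ℝ) ^ γ * lam * ‖x - a‖ ^ γ < ‖f x‖} ∩
            Metric.closedBall a r) /
          (ballVol m * ENNReal.ofReal (r ^ m))) (𝓝[>] (0 : ℝ))
        < ENNReal.ofReal (M * (1 - (2 : ℝ) ^ (-(m : ℝ)))⁻¹) := by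
  haveI : Nontrivial (EuclideanSpace ℝ (Fin m)) := by
    have : Nonempty (Fin m) := ⟨⟨0, hm⟩⟩
    infer_instance
  have hB0 : ballVol m ≠ 0 := (measure_closedBall_pos volume _ one_pos).ne'
  have hBt : ballVol m ≠ ∞ := measure_closedBall_lt_top.ne
  have hp0 : (0:ℝ) ≤ (2:ℝ)⁻¹ ^ m := by positivity
  have hp1 : (2:ℝ)⁻¹ ^ m < 1 := pow_lt_one₀ (by norm_num) (by norm_num) (by omega)
  set q : ℝ≥0∞ := ENNReal.ofReal ((2:ℝ)⁻¹ ^ m) with hqdef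
  have hq1 : q < 1 := by
    rw [hqdef]
    exact ENNReal.ofReal_lt_one.mpr hp1
  set K : ℝ≥0∞ := (1 - q)⁻¹ with hKdef
  have hK0 : K ≠ 0 := by
    rw [hKdef, Ne, ENNReal.inv_eq_zero]
    exact ((tsub_le_self.trans_lt ENNReal.one_lt_top)).ne
  have hKt : K ≠ ∞ := by
    rw [hKdef, Ne, ENNReal.inv_eq_top]
    exact (tsub_pos_of_lt hq1).ne'
  have h2m : (2:ℝ) ^ (-(m:ℝ)) = (2:ℝ)⁻¹ ^ m := by
    rw [Real.rpow_neg (by norm_num : (0:ℝ) ≤ 2), Real.rpow_natCast, ← inv_pow]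
  have hRHS : ENNReal.ofReal (M * (1 - (2:ℝ) ^ (-(m:ℝ)))⁻¹) = ENNReal.ofReal M * K := by
    rw [h2m, ENNReal.ofReal_mul hM.le]
    congr 1
    rw [hKdef, hqdef, ← ENNReal.ofReal_one, ← ENNReal.ofReal_sub 1 hp0,
      ← ENNReal.ofReal_inv_of_pos (by linarith)]
  obtain ⟨c, hc1, hc2⟩ := exists_between h
  have hev : ∀ᶠ r in 𝓝[>] (0:ℝ),
      volume ({x | x ∈ A ∧ lam * r ^ γ < ‖f x‖} ∩ Metric.closedBall a r) /
        (ballVol m * ENNReal.ofReal (r ^ m)) < c :=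
    eventually_lt_of_limsup_lt hc1
  rw [eventually_nhdsWithin_iff, Metric.eventually_nhds_iff] at hev
  obtain ⟨δ, hδ0, hδ⟩ := hev
  have hvol : ∀ s : ℝ, 0 < s → s < δ →
      volume ({x | x ∈ A ∧ lam * s ^ γ < ‖f x‖} ∩ Metric.closedBall a s)
        ≤ c * (ballVol m * ENNReal.ofReal (s ^ m)) := by
    intro s hs hsδ
    have hds : dist s 0 < δ := by
      rw [Real.dist_eq, sub_zero, abs_of_pos hs]; exact hsδ
    have h1 := hδ hds hs
    have hd0 : ballVol m * ENNReal.ofReal (s ^ m) ≠ 0 := by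
      refine mul_ne_zero hB0 ?_
      simpa [ENNReal.ofReal_pos] using pow_pos hs m
    have hdt : ballVol m * ENNReal.ofReal (s ^ m) ≠ ∞ :=
      ENNReal.mul_ne_top hBt ENNReal.ofReal_ne_top
    exact (ENNReal.div_le_iff hd0 hdt).mp h1.le
  have key : ∀ r : ℝ, 0 < r → r < δ →
      volume ({x | x ∈ A ∧ (2:ℝ) ^ γ * lam * ‖x - a‖ ^ γ < ‖f x‖} ∩
          Metric.closedBall a r)
        ≤ c * (ballVol m * ENNReal.ofReal (r ^ m)) * K := by
    intro r hr hrδ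
    have hsub : {x | x ∈ A ∧ (2:ℝ) ^ γ * lam * ‖x - a‖ ^ γ < ‖f x‖} ∩
          Metric.closedBall a r ⊆
        {a} ∪ ⋃ k : ℕ, ({x | x ∈ A ∧ lam * (r / 2 ^ k) ^ γ < ‖f x‖} ∩
          Metric.closedBall a (r / 2 ^ k)) := by
      rintro x ⟨⟨hxA, hxf⟩, hxb⟩
      by_cases hxa : x = a
      · exact Or.inl hxa
      have hna : (0:ℝ) < ‖x - a‖ := by
        rw [norm_pos_iff]; exact sub_ne_zero.mpr hxa
      have hdist : ‖x - a‖ ≤ r := by rwa [Metric.mem_closedBall, dist_eq_norm] at hxb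
      set t : ℝ := r / ‖x - a‖ with ht
      have ht1 : 1 ≤ t := (one_le_div hna).mpr hdist
      have ht0 : 0 < t := lt_of_lt_of_le one_pos ht1
      set k : ℕ := (Int.log 2 t).toNat with hk
      have hklog : (k : ℤ) = Int.log 2 t := by
        rw [hk]
        exact Int.toNat_of_nonneg
          ((Int.zpow_le_iff_le_log one_lt_two ht0).mp (by simpa using ht1))
      have h1 : (2:ℝ) ^ k ≤ t := by
        have h' := Int.zpow_log_le_self (R := ℝ) (b := 2) one_lt_two ht0
        rw [← hklog, zpow_natCast] at h'
        exact_mod_cast h'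
      have h2 : t < 2 ^ (k + 1) := by
        have h' := Int.lt_zpow_succ_log_self (R := ℝ) (b := 2) one_lt_two t
        rw [← hklog, show ((k:ℤ) + 1) = ((k + 1 : ℕ) : ℤ) by push_cast; ring,
          zpow_natCast] at h'
        exact_mod_cast h'
      have h2k : (0:ℝ) < 2 ^ k := by positivity
      refine Or.inr (mem_iUnion.mpr ⟨k, ⟨hxA, ?_⟩, ?_⟩)
      · have hrk : r / 2 ^ k < 2 * ‖x - a‖ := by
          rw [div_lt_iff₀ h2k]
          have hr2 : r < 2 ^ (k + 1) * ‖x - a‖ := by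
            have := mul_lt_mul_of_pos_right h2 hna
            rwa [ht, div_mul_cancel₀ _ hna.ne'] at this
          calc r < 2 ^ (k + 1) * ‖x - a‖ := hr2
            _ = 2 * ‖x - a‖ * 2 ^ k := by ring
        have hle : lam * (r / 2 ^ k) ^ γ ≤ lam * ((2:ℝ) ^ γ * ‖x - a‖ ^ γ) := by
          refine mul_le_mul_of_nonneg_left ?_ hlam
          rw [← Real.mul_rpow (by norm_num) hna.le]
          exact Real.rpow_le_rpow (by positivity) hrk.le (le_trans zero_le_one hγ)
        calc lam * (r / 2 ^ k) ^ γ ≤ lam * ((2:ℝ) ^ γ * ‖x - a‖ ^ γ) := hle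
          _ = (2:ℝ) ^ γ * lam * ‖x - a‖ ^ γ := by ring
          _ < ‖f x‖ := hxf
      · rw [Metric.mem_closedBall, dist_eq_norm, le_div_iff₀ h2k]
        calc ‖x - a‖ * 2 ^ k ≤ ‖x - a‖ * t := by
              exact mul_le_mul_of_nonneg_left h1 hna.le
          _ = r := by rw [ht, mul_div_cancel₀ _ hna.ne']
    have hterm : ∀ k : ℕ, c * (ballVol m * ENNReal.ofReal ((r / 2 ^ k) ^ m))
        = c * (ballVol m * ENNReal.ofReal (r ^ m)) * q ^ k := by
      intro k
      rw [show ((r / 2 ^ k) ^ m) = r ^ m * ((2:ℝ)⁻¹ ^ m) ^ k by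
          rw [div_eq_mul_inv, mul_pow, ← inv_pow, ← pow_mul, ← pow_mul, mul_comm k m],
        ENNReal.ofReal_mul (by positivity), ENNReal.ofReal_pow hp0, hqdef]
      ring
    calc volume ({x | x ∈ A ∧ (2:ℝ) ^ γ * lam * ‖x - a‖ ^ γ < ‖f x‖} ∩
          Metric.closedBall a r)
        ≤ volume ({a} ∪ ⋃ k : ℕ, ({x | x ∈ A ∧ lam * (r / 2 ^ k) ^ γ < ‖f x‖} ∩
            Metric.closedBall a (r / 2 ^ k))) := measure_mono hsub
      _ ≤ volume ({a} : Set _) + volume (⋃ k : ℕ,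
            ({x | x ∈ A ∧ lam * (r / 2 ^ k) ^ γ < ‖f x‖} ∩
            Metric.closedBall a (r / 2 ^ k))) := measure_union_le _ _
      _ = volume (⋃ k : ℕ, ({x | x ∈ A ∧ lam * (r / 2 ^ k) ^ γ < ‖f x‖} ∩
            Metric.closedBall a (r / 2 ^ k))) := by
            rw [measure_singleton, zero_add]
      _ ≤ ∑' k : ℕ, volume ({x | x ∈ A ∧ lam * (r / 2 ^ k) ^ γ < ‖f x‖} ∩
            Metric.closedBall a (r / 2 ^ k)) := measure_iUnion_le _
      _ ≤ ∑' k : ℕ, c * (ballVol m * ENNReal.ofReal ((r / 2 ^ k) ^ m)) := by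
            refine ENNReal.tsum_le_tsum fun k => hvol _ (by positivity) ?_
            exact lt_of_le_of_lt (div_le_self hr.le (one_le_pow₀ (by norm_num : (1:ℝ) ≤ 2))) hrδ
      _ = c * (ballVol m * ENNReal.ofReal (r ^ m)) * K := by
            simp_rw [hterm]
            rw [ENNReal.tsum_mul_left, ENNReal.tsum_geometric, hKdef]
  have hfin : c * K < ENNReal.ofReal (M * (1 - (2:ℝ) ^ (-(m:ℝ)))⁻¹) := by
    rw [hRHS]
    rw [mul_comm c K, mul_comm _ K]
    exact ENNReal.mul_lt_mul_right hK0 hKt hc2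
  refine lt_of_le_of_lt (limsup_le_of_le (by isBoundedDefault) ?_) hfin
  filter_upwards [Ioo_mem_nhdsGT_of_mem (Set.left_mem_Ico.mpr hδ0)] with r hr
  obtain ⟨hr0, hrδ⟩ := hr
  have hd0 : ballVol m * ENNReal.ofReal (r ^ m) ≠ 0 := by
    refine mul_ne_zero hB0 ?_
    simpa [ENNReal.ofReal_pos] using pow_pos hr0 m
  have hdt : ballVol m * ENNReal.ofReal (r ^ m) ≠ ∞ :=
    ENNReal.mul_ne_top hBt ENNReal.ofReal_ne_top
  rw [ENNReal.div_le_iff hd0 hdt]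
  calc volume ({x | x ∈ A ∧ (2:ℝ) ^ γ * lam * ‖x - a‖ ^ γ < ‖f x‖} ∩
        Metric.closedBall a r)
      ≤ c * (ballVol m * ENNReal.ofReal (r ^ m)) * K := key r hr0 hrδ
    _ = c * K * (ballVol m * ENNReal.ofReal (r ^ m)) := by ring
end

section
/- Let $A = \bigcup_{i=0}^{\infty} \{t \in \mathbb{R} : 2^{-2i-1} < |t| < 2^{-2i}\}$ and let $\phi = \mathcal{L}^1 \llcorner A$. Then $\mathrm{Tan}^1_*(\phi, 0) = \{0\}$, while the set $T = \{v \in \mathbb{R} : \Theta^1_*(\phi \llcorner \mathbf{E}(0,v,\epsilon), 0) > 0 \text{ for every } \epsilon > 0\}$ equals all of $\mathbb{R}$. -/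
open MeasureTheory Metric Filter Set
open scoped ENNReal Topology

variable {X : Type*} [NormedAddCommGroup X] [NormedSpace ℝ X] [MeasurableSpace X]

/-- The cone `𝐄(a,v,ε) = {x : |r(x-a) - v| < ε for some r > 0}`. -/
def ECone (a v : X) (ε : ℝ) : Set X :=
  {x | ∃ r : ℝ, 0 < r ∧ ‖r • (x - a) - v‖ < ε}

/-- Upper `m`-dimensional density `Θ^{*m}(φ, a)`. -/
noncomputable def upperDensity (m : ℕ) (φ : Measure X) (a : X) : ℝ≥0∞ :=
  Filter.limsup (fun r : ℝ =>
    φ (Metric.closedBall a r) / (ballVol m * ENNReal.ofReal (r ^ m))) (𝓝[>] (0 : ℝ))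

/-- Lower `m`-dimensional density `Θ^m_*(φ, a)`. -/
noncomputable def lowerDensity (m : ℕ) (φ : Measure X) (a : X) : ℝ≥0∞ :=
  Filter.liminf (fun r : ℝ =>
    φ (Metric.closedBall a r) / (ballVol m * ENNReal.ofReal (r ^ m))) (𝓝[>] (0 : ℝ))

/-- The `m`-dimensional approximate upper tangent cone `Tan^{*m}(φ, a)`. -/
def TanUpper (m : ℕ) (φ : Measure X) (a : X) : Set X :=
  {v | ∀ ε : ℝ, 0 < ε → 0 < upperDensity m (φ.restrict (ECone a v ε)) a}

/-- The `m`-dimensional approximate lower tangent cone `Tan^m_*(φ, a)`. -/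
def TanLower (m : ℕ) (φ : Measure X) (a : X) : Set X :=
  {v | ∀ ε : ℝ, 0 < ε → ∃ η : ℝ, 0 < η ∧ ∀ r : ℝ, 0 < r → r ≤ η →
    ENNReal.ofReal (η * r ^ m) ≤ φ (Metric.ball (a + r • v) (ε * r))}

/- ### Auxiliary material -/

lemma ballVol_one : ballVol 1 = 2 := by
  rw [ballVol, EuclideanSpace.volume_closedBall]
  rw [Fintype.card_fin]
  have hpi : (0:ℝ) < Real.sqrt Real.pi := Real.sqrt_pos.2 Real.pi_pos
  have h : Real.Gamma ((1:ℝ)/2 + 1) = Real.sqrt Real.pi / 2 := by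
    rw [Real.Gamma_add_one (by norm_num), Real.Gamma_one_half_eq]; ring
  have h2 : Real.sqrt Real.pi ^ 1 / Real.Gamma ((1:ℝ) / 2 + 1) = 2 := by
    rw [h]; field_simp
  norm_num at h2 ⊢
  exact h2

/-- The union of dyadic annuli. -/
def AA : Set ℝ := ⋃ i : ℕ, {t : ℝ | (2 : ℝ) ^ (-(2 * (i : ℤ)) - 1) < |t| ∧
      |t| < (2 : ℝ) ^ (-(2 * (i : ℤ)))}

lemma AA_meas : MeasurableSet AA := by
  apply MeasurableSet.iUnion
  intro i
  have : {t : ℝ | (2 : ℝ) ^ (-(2 * (i : ℤ)) - 1) < |t| ∧ |t| < (2 : ℝ) ^ (-(2 * (i : ℤ)))}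
      = (fun t : ℝ => |t|) ⁻¹' Set.Ioo ((2 : ℝ) ^ (-(2 * (i : ℤ)) - 1)) ((2 : ℝ) ^ (-(2 * (i : ℤ)))) := rfl
  rw [this]
  exact measurableSet_Ioo.preimage (measurable_id.abs)

lemma two_zpow_pos (a : ℤ) : (0:ℝ) < 2 ^ a := zpow_pos (by norm_num) a

lemma ann_pos_subset (i : ℕ) :
    Set.Ioo ((2:ℝ)^(-(2*(i:ℤ))-3)) ((2:ℝ)^(-(2*(i:ℤ))-2)) ⊆ AA := by
  intro t ht
  have ht0 : 0 < t := lt_trans (two_zpow_pos _) ht.1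
  refine Set.mem_iUnion.2 ⟨i+1, ?_, ?_⟩
  · rw [abs_of_pos ht0]; push_cast
    rw [show -(2*((i:ℤ)+1))-1 = -(2*(i:ℤ))-3 by ring]; exact ht.1
  · rw [abs_of_pos ht0]; push_cast
    rw [show -(2*((i:ℤ)+1)) = -(2*(i:ℤ))-2 by ring]; exact ht.2

lemma ann_neg_subset (i : ℕ) :
    Set.Ioo (-((2:ℝ)^(-(2*(i:ℤ))-2))) (-((2:ℝ)^(-(2*(i:ℤ))-3))) ⊆ AA := by
  intro t ht
  have ht0 : t < 0 := lt_trans ht.2 (by simpa using (two_zpow_pos (-(2*(i:ℤ))-3)))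
  have h1 : (2:ℝ)^(-(2*(i:ℤ))-3) < -t := by linarith [ht.2]
  have h2 : -t < (2:ℝ)^(-(2*(i:ℤ))-2) := by linarith [ht.1]
  refine Set.mem_iUnion.2 ⟨i+1, ?_, ?_⟩
  · rw [abs_of_neg ht0]; push_cast
    rw [show -(2*((i:ℤ)+1))-1 = -(2*(i:ℤ))-3 by ring]; exact h1
  · rw [abs_of_neg ht0]; push_cast
    rw [show -(2*((i:ℤ)+1)) = -(2*(i:ℤ))-2 by ring]; exact h2

lemma find_i {s : ℝ} (hs0 : 0 < s) (hs1 : s ≤ 1) :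
    ∃ i : ℕ, (2:ℝ)^(-(2*(i:ℤ))-2) ≤ s ∧ s ≤ (2:ℝ)^(-(2*(i:ℤ))) := by
  have hex : ∃ n : ℕ, (2:ℝ)^(-(2*(n:ℤ))-2) ≤ s := by
    obtain ⟨n, hn⟩ := exists_pow_lt_of_lt_one hs0 (by norm_num : (1:ℝ)/2 < 1)
    refine ⟨n, le_trans ?_ (le_of_lt hn)⟩
    have : ((1:ℝ)/2)^n = (2:ℝ)^(-(n:ℤ)) := by
      rw [one_div, inv_pow, ← zpow_natCast, ← zpow_neg]
    rw [this]
    exact zpow_le_zpow_right₀ one_le_two (by omega)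
  classical
  let i := Nat.find hex
  refine ⟨i, Nat.find_spec hex, ?_⟩
  rcases Nat.eq_zero_or_pos i with h0 | h0
  · rw [h0]; simpa using hs1
  · have hmin := Nat.find_min hex (show i - 1 < i by omega)
    push_neg at hmin
    calc s ≤ (2:ℝ)^(-(2*((i-1:ℕ):ℤ))-2) := le_of_lt hmin
    _ = (2:ℝ)^(-(2*(i:ℤ))) := by
        congr 1
        have : ((i-1:ℕ):ℤ) = (i:ℤ) - 1 := by
          have : (1:ℕ) ≤ i := h0
          omega
        rw [this]; ring

lemma meas_pos_side {s : ℝ} (hs0 : 0 < s) (hs1 : s ≤ 1) :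
    ENNReal.ofReal (s/8) ≤ volume (AA ∩ Set.Ioo 0 s) := by
  obtain ⟨i, hi1, hi2⟩ := find_i hs0 hs1
  have hsub : Set.Ioo ((2:ℝ)^(-(2*(i:ℤ))-3)) ((2:ℝ)^(-(2*(i:ℤ))-2)) ⊆ AA ∩ Set.Ioo 0 s := by
    intro t ht
    refine ⟨ann_pos_subset i ht, lt_trans (two_zpow_pos _) ht.1, lt_of_lt_of_le ht.2 hi1⟩
  calc ENNReal.ofReal (s/8)
      ≤ ENNReal.ofReal ((2:ℝ)^(-(2*(i:ℤ))-2) - (2:ℝ)^(-(2*(i:ℤ))-3)) := by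
        apply ENNReal.ofReal_le_ofReal
        have e2 : (2:ℝ)^(-(2*(i:ℤ))-2) = (2:ℝ)^(-(2*(i:ℤ))) / 4 := by
          rw [zpow_sub₀ (by norm_num : (2:ℝ) ≠ 0)]; norm_num
        have e3 : (2:ℝ)^(-(2*(i:ℤ))-3) = (2:ℝ)^(-(2*(i:ℤ))) / 8 := by
          rw [zpow_sub₀ (by norm_num : (2:ℝ) ≠ 0)]; norm_num
        rw [e2, e3]; linarith
    _ = volume (Set.Ioo ((2:ℝ)^(-(2*(i:ℤ))-3)) ((2:ℝ)^(-(2*(i:ℤ))-2))) := by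
        rw [Real.volume_Ioo]
    _ ≤ volume (AA ∩ Set.Ioo 0 s) := measure_mono hsub

lemma meas_neg_side {s : ℝ} (hs0 : 0 < s) (hs1 : s ≤ 1) :
    ENNReal.ofReal (s/8) ≤ volume (AA ∩ Set.Ioo (-s) 0) := by
  obtain ⟨i, hi1, hi2⟩ := find_i hs0 hs1
  have hsub : Set.Ioo (-((2:ℝ)^(-(2*(i:ℤ))-2))) (-((2:ℝ)^(-(2*(i:ℤ))-3))) ⊆ AA ∩ Set.Ioo (-s) 0 := by
    intro t ht
    refine ⟨ann_neg_subset i ht, lt_of_le_of_lt (by linarith : -s ≤ -((2:ℝ)^(-(2*(i:ℤ))-2))) ht.1,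
      lt_trans ht.2 (by simpa using (two_zpow_pos (-(2*(i:ℤ))-3)))⟩
  calc ENNReal.ofReal (s/8)
      ≤ ENNReal.ofReal ((-((2:ℝ)^(-(2*(i:ℤ))-3))) - (-((2:ℝ)^(-(2*(i:ℤ))-2)))) := by
        apply ENNReal.ofReal_le_ofReal
        have e2 : (2:ℝ)^(-(2*(i:ℤ))-2) = (2:ℝ)^(-(2*(i:ℤ))) / 4 := by
          rw [zpow_sub₀ (by norm_num : (2:ℝ) ≠ 0)]; norm_num
        have e3 : (2:ℝ)^(-(2*(i:ℤ))-3) = (2:ℝ)^(-(2*(i:ℤ))) / 8 := by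
          rw [zpow_sub₀ (by norm_num : (2:ℝ) ≠ 0)]; norm_num
        rw [e2, e3]; linarith
    _ = volume (Set.Ioo (-((2:ℝ)^(-(2*(i:ℤ))-2))) (-((2:ℝ)^(-(2*(i:ℤ))-3)))) := by
        rw [Real.volume_Ioo]
    _ ≤ volume (AA ∩ Set.Ioo (-s) 0) := measure_mono hsub

lemma gap_not_mem {i : ℕ} {x : ℝ} (h1 : (2:ℝ)^(-(2*(i:ℤ))-2) ≤ |x|)
    (h2 : |x| ≤ (2:ℝ)^(-(2*(i:ℤ))-1)) : x ∉ AA := by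
  intro hx
  obtain ⟨j, hj1, hj2⟩ := Set.mem_iUnion.1 hx
  rcases le_or_gt (j:ℤ) (i:ℤ) with hji | hij
  · have : (2:ℝ)^(-(2*(i:ℤ))-1) ≤ (2:ℝ)^(-(2*(j:ℤ))-1) :=
      zpow_le_zpow_right₀ one_le_two (by omega)
    linarith
  · have : (2:ℝ)^(-(2*(j:ℤ))) ≤ (2:ℝ)^(-(2*(i:ℤ))-2) :=
      zpow_le_zpow_right₀ one_le_two (by omega)
    linarith

lemma cone_pos {v ε x : ℝ} (hv : 0 ≤ v) (hε : 0 < ε) (hx : 0 < x) :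
    x ∈ ECone (0:ℝ) v ε := by
  refine ⟨(v + ε/2)/x, by positivity, ?_⟩
  have : ((v + ε/2)/x) • (x - 0) - v = ε/2 := by
    rw [smul_eq_mul, sub_zero, div_mul_cancel₀ _ hx.ne']; ring
  rw [this]
  rw [Real.norm_eq_abs, abs_of_pos (by positivity)]
  linarith

lemma cone_neg {v ε x : ℝ} (hv : v ≤ 0) (hε : 0 < ε) (hx : x < 0) :
    x ∈ ECone (0:ℝ) v ε := by
  have hx' : x ≠ 0 := ne_of_lt hx
  refine ⟨(v - ε/2)/x, div_pos_of_neg_of_neg (by linarith) hx, ?_⟩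
  have : ((v - ε/2)/x) • (x - 0) - v = -(ε/2) := by
    rw [smul_eq_mul, sub_zero, div_mul_cancel₀ _ hx']; ring
  rw [this]
  rw [Real.norm_eq_abs, abs_of_neg (by linarith : -(ε/2) < 0), neg_neg]
  linarith

theorem stmt5
    (A : Set ℝ)
    (hA : A = ⋃ i : ℕ, {t : ℝ | (2 : ℝ) ^ (-(2 * (i : ℤ)) - 1) < |t| ∧
      |t| < (2 : ℝ) ^ (-(2 * (i : ℤ)))})
    (φ : Measure ℝ) (hφ : φ = volume.restrict A) :
    TanLower 1 φ (0 : ℝ) = {0} ∧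
    {v : ℝ | ∀ ε : ℝ, 0 < ε →
        0 < lowerDensity 1 (φ.restrict (ECone (0 : ℝ) v ε)) (0 : ℝ)} = Set.univ := by
  have hA' : A = AA := hA
  subst hA'
  subst hφ
  constructor
  · -- TanLower = {0}
    ext v
    simp only [TanLower, Set.mem_setOf_eq, Set.mem_singleton_iff]
    constructor
    · intro hv
      by_contra hv0
      have hw : 0 < |v| := abs_pos.2 hv0
      obtain ⟨η, hη, hmain⟩ := hv (|v|/8) (by positivity)
      -- find i with r := (8/7) * 2^(-2i-2) / |v| ≤ η
      obtain ⟨n, hn⟩ := exists_pow_lt_of_lt_one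
        (show (0:ℝ) < 7*η*|v|/8 by positivity) (by norm_num : (1:ℝ)/2 < 1)
      have hgle : (2:ℝ)^(-(2*(n:ℤ))-2) ≤ 7*η*|v|/8 := by
        refine le_trans ?_ (le_of_lt hn)
        have : ((1:ℝ)/2)^n = (2:ℝ)^(-(n:ℤ)) := by
          rw [one_div, inv_pow, ← zpow_natCast, ← zpow_neg]
        rw [this]
        exact zpow_le_zpow_right₀ one_le_two (by omega)
      set g : ℝ := (2:ℝ)^(-(2*(n:ℤ))-2) with hgdef
      have hg : 0 < g := two_zpow_pos _
      set r : ℝ := (8/7) * g / |v| with hrdef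
      have hr : 0 < r := by positivity
      have hrv : r * |v| = (8/7) * g := by
        rw [hrdef]; field_simp
      have hrη : r ≤ η := by
        rw [hrdef, div_le_iff₀ hw]
        linarith
      have hle := hmain r hr hrη
      have hempty : Metric.ball ((0:ℝ) + r • v) (|v|/8 * r) ∩ AA = ∅ := by
        rw [Set.eq_empty_iff_forall_notMem]
        rintro x ⟨hxball, hxA⟩
        have hd : |x - r * v| < |v|/8 * r := by
          have := Metric.mem_ball.1 hxball
          rw [Real.dist_eq] at this
          simpa [smul_eq_mul] using this
        have habs : |r * v| = r * |v| := by rw [abs_mul, abs_of_pos hr]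
        have hlow : r * |v| - |x - r * v| ≤ |x| := by
          have h1 := abs_sub_abs_le_abs_sub (r*v) x
          rw [habs, abs_sub_comm] at h1
          linarith
        have hhigh : |x| ≤ r * |v| + |x - r * v| := by
          have h1 := abs_sub_abs_le_abs_sub x (r*v)
          rw [habs] at h1
          linarith
        rw [hrv] at hlow hhigh
        have hd' : |x - r * v| < g / 7 := by nlinarith [hd, hrv]
        have hx1 : g ≤ |x| := by linarith
        have hx2 : |x| ≤ (2:ℝ)^(-(2*(n:ℤ))-1) := by
          have h2g : (2:ℝ)^(-(2*(n:ℤ))-1) = 2 * g := by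
            rw [hgdef, show -(2*(n:ℤ))-1 = (-(2*(n:ℤ))-2)+1 by ring,
              zpow_add₀ (by norm_num : (2:ℝ) ≠ 0), zpow_one]
            ring
          rw [h2g]
          linarith
        exact gap_not_mem hx1 hx2 hxA
      have hzero : (volume.restrict AA) (Metric.ball ((0:ℝ) + r • v) (|v|/8 * r)) = 0 := by
        rw [Measure.restrict_apply measurableSet_ball, hempty]
        simp
      rw [hzero] at hle
      have : (0:ℝ≥0∞) < ENNReal.ofReal (η * r ^ 1) := by
        rw [ENNReal.ofReal_pos]
        simpa using mul_pos hη hr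
      exact absurd (lt_of_lt_of_le this hle) (lt_irrefl _)
    · rintro rfl
      intro ε hε
      refine ⟨min (ε/8) (1/ε), lt_min (by positivity) (by positivity), ?_⟩
      intro r hr hrη
      have hr8 : r ≤ ε/8 := le_trans hrη (min_le_left _ _)
      have hr1 : r ≤ 1/ε := le_trans hrη (min_le_right _ _)
      have hεr0 : 0 < ε * r := mul_pos hε hr
      have hεr1 : ε * r ≤ 1 := by
        calc ε * r ≤ ε * (1/ε) := by nlinarith
        _ = 1 := by field_simp
      have key := meas_pos_side hεr0 hεr1
      have hsub : AA ∩ Set.Ioo 0 (ε*r) ⊆ Metric.ball ((0:ℝ) + r • (0:ℝ)) (ε * r) ∩ AA := by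
        rintro t ⟨htA, ht1, ht2⟩
        refine ⟨?_, htA⟩
        rw [Metric.mem_ball, Real.dist_eq]
        simp only [smul_eq_mul, mul_zero, add_zero, sub_zero]
        rw [abs_of_pos ht1]
        exact ht2
      calc ENNReal.ofReal (min (ε/8) (1/ε) * r ^ 1)
          ≤ ENNReal.ofReal (ε * r / 8) := by
            apply ENNReal.ofReal_le_ofReal
            have : min (ε/8) (1/ε) ≤ ε/8 := min_le_left _ _
            nlinarith
        _ ≤ volume (AA ∩ Set.Ioo 0 (ε*r)) := key
        _ ≤ volume (Metric.ball ((0:ℝ) + r • (0:ℝ)) (ε * r) ∩ AA) := measure_mono hsub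
        _ = (volume.restrict AA) (Metric.ball ((0:ℝ) + r • (0:ℝ)) (ε * r)) := by
            rw [Measure.restrict_apply measurableSet_ball]
  · -- second part
    rw [Set.eq_univ_iff_forall]
    intro v
    simp only [Set.mem_setOf_eq]
    intro ε hε
    set μ := ((volume.restrict AA).restrict (ECone (0:ℝ) v ε)) with hμ
    have hev : ∀ᶠ r in 𝓝[>] (0:ℝ), ENNReal.ofReal (1/16)
        ≤ μ (Metric.closedBall (0:ℝ) r) / (ballVol 1 * ENNReal.ofReal (r ^ 1)) := by
      filter_upwards [Ioo_mem_nhdsGT_of_mem (show (0:ℝ) ∈ Set.Ico (0:ℝ) 1 by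
        constructor <;> norm_num)] with r hrm
      obtain ⟨hr0, hr1⟩ := hrm
      have hnum : ENNReal.ofReal (r/8) ≤ μ (Metric.closedBall (0:ℝ) r) := by
        rcases le_or_gt 0 v with hv | hv
        · have hsub : AA ∩ Set.Ioo 0 r ⊆ Metric.closedBall (0:ℝ) r ∩ ECone (0:ℝ) v ε := by
            rintro t ⟨htA, ht1, ht2⟩
            refine ⟨?_, cone_pos hv hε ht1⟩
            rw [Metric.mem_closedBall, Real.dist_eq, sub_zero, abs_of_pos ht1]
            exact le_of_lt ht2
          have hSm : MeasurableSet (AA ∩ Set.Ioo 0 r) := AA_meas.inter measurableSet_Ioo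
          calc ENNReal.ofReal (r/8) ≤ volume (AA ∩ Set.Ioo 0 r) := meas_pos_side hr0 (le_of_lt hr1)
            _ = volume ((AA ∩ Set.Ioo 0 r) ∩ AA) := by
                congr 1
                rw [Set.inter_assoc, Set.inter_comm (Set.Ioo 0 r), ← Set.inter_assoc,
                  Set.inter_self]
            _ = (volume.restrict AA) (AA ∩ Set.Ioo 0 r) := by
                rw [Measure.restrict_apply hSm]
            _ ≤ (volume.restrict AA) (Metric.closedBall (0:ℝ) r ∩ ECone (0:ℝ) v ε) :=
                measure_mono hsub
            _ = μ (Metric.closedBall (0:ℝ) r) := by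
                rw [hμ, Measure.restrict_apply measurableSet_closedBall]
        · have hsub : AA ∩ Set.Ioo (-r) 0 ⊆ Metric.closedBall (0:ℝ) r ∩ ECone (0:ℝ) v ε := by
            rintro t ⟨htA, ht1, ht2⟩
            refine ⟨?_, cone_neg (le_of_lt hv) hε ht2⟩
            rw [Metric.mem_closedBall, Real.dist_eq, sub_zero, abs_of_neg ht2]
            linarith
          have hSm : MeasurableSet (AA ∩ Set.Ioo (-r) 0) := AA_meas.inter measurableSet_Ioo
          calc ENNReal.ofReal (r/8) ≤ volume (AA ∩ Set.Ioo (-r) 0) :=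
                meas_neg_side hr0 (le_of_lt hr1)
            _ = volume ((AA ∩ Set.Ioo (-r) 0) ∩ AA) := by
                congr 1
                rw [Set.inter_assoc, Set.inter_comm (Set.Ioo (-r) 0), ← Set.inter_assoc,
                  Set.inter_self]
            _ = (volume.restrict AA) (AA ∩ Set.Ioo (-r) 0) := by
                rw [Measure.restrict_apply hSm]
            _ ≤ (volume.restrict AA) (Metric.closedBall (0:ℝ) r ∩ ECone (0:ℝ) v ε) :=
                measure_mono hsub
            _ = μ (Metric.closedBall (0:ℝ) r) := by
                rw [hμ, Measure.restrict_apply measurableSet_closedBall]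
      have hden : ballVol 1 * ENNReal.ofReal (r ^ 1) = ENNReal.ofReal (2 * r) := by
        rw [ballVol_one, pow_one]
        rw [ENNReal.ofReal_mul (by norm_num : (0:ℝ) ≤ 2)]
        norm_num
      rw [hden]
      calc ENNReal.ofReal (1/16) = ENNReal.ofReal ((r/8) / (2*r)) := by
            congr 1
            field_simp
            ring
        _ = ENNReal.ofReal (r/8) / ENNReal.ofReal (2*r) := by
            rw [ENNReal.ofReal_div_of_pos (by positivity)]
        _ ≤ μ (Metric.closedBall (0:ℝ) r) / ENNReal.ofReal (2*r) :=
            ENNReal.div_le_div_right hnum _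
    have := Filter.le_liminf_of_le (by isBoundedDefault) hev
    refine lt_of_lt_of_le ?_ this
    rw [ENNReal.ofReal_pos]
    norm_num
end

section
/- Suppose $1 \leq m \leq n$ are integers, $A \subseteq \mathbb{R}^n$, $a \in \mathbb{R}^n$ and $T$ is an $m$-dimensional linear subspace of $\mathbb{R}^n$. Then the following three conditions are equivalent: (1) $\mathrm{Tan}^{*m}(\mathcal{H}^m \llcorner A, a) \subseteq T$; (2) for every $\epsilon > 0$, $\Theta^m(\mathcal{H}^m \llcorner (A \setminus \mathbf{X}(a,T,\epsilon)), a) = 0$, where $\mathbf{X}(a,T,\epsilon) = \{z : |T^\perp_\natural(z-a)| \leq \epsilon |T_\natural(z-a)|\}$; (3) for every $\epsilon > 0$, $\lim_{r\to 0} \frac{\mathcal{H}^m(A \cap \mathbf{B}(a,r) \cap \{z : |T^\perp_\natural(z-a)| > \epsilon r\})}{\alpha(m) r^m} = 0$. -/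
open MeasureTheory Metric Filter Set
open scoped ENNReal Topology

variable {X : Type*} [NormedAddCommGroup X] [NormedSpace ℝ X] [MeasurableSpace X]

/-- Orthogonal projection onto a subspace, as a map into the ambient space. -/
noncomputable def projS {n : ℕ} (T : Submodule ℝ (EuclideanSpace ℝ (Fin n)))
    (x : EuclideanSpace ℝ (Fin n)) : EuclideanSpace ℝ (Fin n) :=
  (Submodule.orthogonalProjection T x : EuclideanSpace ℝ (Fin n))

section facts

lemma ballVol_ne_zero (m : ℕ) : ballVol m ≠ 0 :=
  (measure_closedBall_pos volume _ one_pos).ne'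

lemma ballVol_ne_top (m : ℕ) : ballVol m ≠ ⊤ :=
  measure_closedBall_lt_top.ne

omit [MeasurableSpace X] in
lemma isOpen_ECone (a v : X) (ε : ℝ) : IsOpen (ECone a v ε) := by
  have h : ECone a v ε = ⋃ r : ℝ, ⋃ _ : 0 < r, {x : X | ‖r • (x - a) - v‖ < ε} := by
    ext x; simp [ECone]
  rw [h]
  refine isOpen_iUnion fun r => isOpen_iUnion fun hr => ?_
  have hc : Continuous fun x : X => ‖r • (x - a) - v‖ :=
    ((continuous_const.smul (continuous_id.sub continuous_const)).sub continuous_const).norm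
  exact isOpen_lt hc continuous_const

section proj
variable {n : ℕ} (T : Submodule ℝ (EuclideanSpace ℝ (Fin n)))

lemma projS_pyth (x : EuclideanSpace ℝ (Fin n)) :
    ‖x‖ ^ 2 = ‖projS T x‖ ^ 2 + ‖projS Tᗮ x‖ ^ 2 := by
  have h := Submodule.norm_sq_eq_add_norm_sq_projection x T
  simpa only [Submodule.coe_norm, projS] using h

lemma projS_norm_le (x : EuclideanSpace ℝ (Fin n)) : ‖projS T x‖ ≤ ‖x‖ := by
  have h2 : ‖projS T x‖ ^ 2 ≤ ‖x‖ ^ 2 := by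
    have h := projS_pyth T x
    nlinarith [sq_nonneg ‖projS Tᗮ x‖]
  exact (pow_le_pow_iff_left₀ (norm_nonneg _) (norm_nonneg _) two_ne_zero).1 h2

lemma projS_smul (c : ℝ) (x : EuclideanSpace ℝ (Fin n)) :
    projS T (c • x) = c • projS T x := by
  rw [projS, _root_.map_smul]; rfl

lemma projS_sub (x y : EuclideanSpace ℝ (Fin n)) :
    projS T (x - y) = projS T x - projS T y := by
  rw [projS, map_sub]; rfl

lemma projS_continuous : Continuous (projS T) :=
  continuous_subtype_val.comp (Submodule.orthogonalProjection T).continuous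

lemma projS_orth_eq_zero_iff (x : EuclideanSpace ℝ (Fin n)) :
    projS Tᗮ x = 0 ↔ x ∈ T := by
  rw [projS, ZeroMemClass.coe_eq_zero, Submodule.orthogonalProjectionOnto_eq_zero_iff,
    Submodule.orthogonal_orthogonal]

lemma projS_eq_self {x : EuclideanSpace ℝ (Fin n)} (hx : x ∈ T) : projS T x = x :=
  Submodule.starProjection_eq_self_iff.2 hx
end proj

lemma hausdorff_singleton {m n : ℕ} (hm : 1 ≤ m) (a : EuclideanSpace ℝ (Fin n)) :
    μH[(m : ℝ)] ({a} : Set (EuclideanSpace ℝ (Fin n))) = 0 := by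
  have h : ((m : NNReal) : ℝ) = (m : ℝ) := by norm_cast
  rw [← h]
  apply hausdorffMeasure_of_dimH_lt
  rw [dimH_singleton]
  exact_mod_cast Nat.cast_pos.2 hm

-- (2) → (3)

lemma key23 {m n : ℕ} {A : Set (EuclideanSpace ℝ (Fin n))} {a : EuclideanSpace ℝ (Fin n)}
    {T : Submodule ℝ (EuclideanSpace ℝ (Fin n))} {ε : ℝ} (hε : 0 < ε)
    (h2 : Filter.Tendsto (fun r : ℝ =>
        μH[(m : ℝ)] ((A \ {z | ‖projS Tᗮ (z - a)‖ ≤ ε * ‖projS T (z - a)‖}) ∩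
            Metric.closedBall a r) / (ballVol m * ENNReal.ofReal (r ^ m)))
        (𝓝[>] (0 : ℝ)) (𝓝 0)) :
    Filter.Tendsto (fun r : ℝ =>
        μH[(m : ℝ)] (A ∩ Metric.closedBall a r ∩ {z | ε * r < ‖projS Tᗮ (z - a)‖}) /
          (ballVol m * ENNReal.ofReal (r ^ m))) (𝓝[>] (0 : ℝ)) (𝓝 0) := by
  refine tendsto_of_tendsto_of_tendsto_of_le_of_le' tendsto_const_nhds h2
    (Eventually.of_forall fun r => zero_le) ?_
  filter_upwards [self_mem_nhdsWithin] with r (hr : r ∈ Ioi (0:ℝ))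
  refine ENNReal.div_le_div_right (measure_mono ?_) _
  rintro z ⟨⟨hzA, hzB⟩, hzX⟩
  refine ⟨⟨hzA, fun (hle : ‖projS Tᗮ (z - a)‖ ≤ ε * ‖projS T (z - a)‖) => ?_⟩, hzB⟩
  have h1 : ‖projS T (z - a)‖ ≤ r := (projS_norm_le T _).trans (by
    rw [← dist_eq_norm]; exact hzB)
  have h2' : ε * r < ‖projS Tᗮ (z - a)‖ := hzX
  nlinarith [hle, h1, h2']

-- KEY (2) → (1)
lemma key21 {m n : ℕ} {A : Set (EuclideanSpace ℝ (Fin n))} {a : EuclideanSpace ℝ (Fin n)}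
    {T : Submodule ℝ (EuclideanSpace ℝ (Fin n))}
    (h2 : ∀ ε : ℝ, 0 < ε → Filter.Tendsto (fun r : ℝ =>
        μH[(m : ℝ)] ((A \ {z | ‖projS Tᗮ (z - a)‖ ≤ ε * ‖projS T (z - a)‖}) ∩
            Metric.closedBall a r) / (ballVol m * ENNReal.ofReal (r ^ m)))
        (𝓝[>] (0 : ℝ)) (𝓝 0)) :
    TanUpper m (μH[(m : ℝ)].restrict A) a ⊆ (T : Set (EuclideanSpace ℝ (Fin n))) := by
  intro v hv
  by_contra hvT
  have hcne : projS Tᗮ v ≠ 0 := fun h0 => hvT ((projS_orth_eq_zero_iff T v).1 h0)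
  set c := ‖projS Tᗮ v‖ with hc
  have hcpos : 0 < c := norm_pos_iff.2 hcne
  set M := ‖projS T v‖ + c / 2 + 1 with hM
  have hMpos : 0 < M := by positivity
  set ε := c / 2 / M with hε'
  have hε : 0 < ε := div_pos (by linarith) hMpos
  have hsub : ∀ x ∈ ECone a v (c / 2),
      ¬(‖projS Tᗮ (x - a)‖ ≤ ε * ‖projS T (x - a)‖) := by
    rintro x ⟨s, hs, hlt⟩ hle
    set w := s • (x - a) with hw
    have hwv : ‖w - v‖ < c / 2 := hlt
    have e1 : ‖projS Tᗮ (v - w)‖ ≤ ‖v - w‖ := projS_norm_le _ _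
    have e2 : c - ‖projS Tᗮ w‖ ≤ ‖projS Tᗮ (v - w)‖ := by
      have := norm_sub_norm_le (projS Tᗮ v) (projS Tᗮ w)
      rw [← projS_sub] at this
      linarith [this]
    have e3 : ‖v - w‖ = ‖w - v‖ := norm_sub_rev _ _
    have hPperp : c / 2 < ‖projS Tᗮ w‖ := by linarith
    have e4 : ‖projS T w‖ - ‖projS T v‖ ≤ ‖projS T (w - v)‖ := by
      have := norm_sub_norm_le (projS T w) (projS T v)
      rw [← projS_sub] at this
      linarith [this]
    have e5 : ‖projS T (w - v)‖ ≤ ‖w - v‖ := projS_norm_le _ _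
    have hPw : ‖projS T w‖ < M := by rw [hM]; linarith
    have hεM : ε * M = c / 2 := div_mul_cancel₀ _ hMpos.ne'
    have hkey : ε * ‖projS T w‖ < ‖projS Tᗮ w‖ := by
      calc ε * ‖projS T w‖ < ε * M := by
            exact mul_lt_mul_of_pos_left hPw hε
        _ = c / 2 := hεM
        _ < ‖projS Tᗮ w‖ := hPperp
    -- transfer back to x - a
    have hnp : ‖projS Tᗮ w‖ = s * ‖projS Tᗮ (x - a)‖ := by
      rw [hw, projS_smul, norm_smul, Real.norm_eq_abs, abs_of_pos hs]
    have hnq : ‖projS T w‖ = s * ‖projS T (x - a)‖ := by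
      rw [hw, projS_smul, norm_smul, Real.norm_eq_abs, abs_of_pos hs]
    rw [hnp, hnq] at hkey
    nlinarith [hkey, hle, hs]
  have hud := hv (c / 2) (by linarith)
  have hls : upperDensity m ((μH[(m : ℝ)].restrict A).restrict (ECone a v (c / 2))) a ≤ 0 := by
    have hlim := (h2 ε hε).limsup_eq
    rw [upperDensity, ← hlim]
    refine limsup_le_limsup (Eventually.of_forall fun r => ?_)
    refine ENNReal.div_le_div_right ?_ _
    rw [Measure.restrict_apply measurableSet_closedBall,
        Measure.restrict_apply (measurableSet_closedBall.inter
          (isOpen_ECone a v (c / 2)).measurableSet)]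
    refine measure_mono ?_
    rintro z ⟨⟨hz1, hz2⟩, hz3⟩
    exact ⟨⟨hz3, hsub z hz2⟩, hz1⟩
  exact absurd (hud.trans_le hls) (lt_irrefl 0)

-- (1) → (2)

lemma key12 {m n : ℕ} (hm : 1 ≤ m) {A : Set (EuclideanSpace ℝ (Fin n))}
    {a : EuclideanSpace ℝ (Fin n)} {T : Submodule ℝ (EuclideanSpace ℝ (Fin n))}
    (h1 : TanUpper m (μH[(m : ℝ)].restrict A) a ⊆ (T : Set (EuclideanSpace ℝ (Fin n))))
    {ε : ℝ} (hε : 0 < ε) :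
    Filter.Tendsto (fun r : ℝ =>
        μH[(m : ℝ)] ((A \ {z | ‖projS Tᗮ (z - a)‖ ≤ ε * ‖projS T (z - a)‖}) ∩
            Metric.closedBall a r) / (ballVol m * ENNReal.ofReal (r ^ m)))
        (𝓝[>] (0 : ℝ)) (𝓝 0) := by
  classical
  set μ : Measure (EuclideanSpace ℝ (Fin n)) := μH[(m : ℝ)] with hμ
  set Xs : Set (EuclideanSpace ℝ (Fin n)) := {z | ‖projS Tᗮ (z - a)‖ ≤ ε * ‖projS T (z - a)‖} with hXs
  set K : Set (EuclideanSpace ℝ (Fin n)) := {v : EuclideanSpace ℝ (Fin n) | ‖v‖ = 1 ∧ ε * ‖projS T v‖ ≤ ‖projS Tᗮ v‖} with hKdef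
  have hKcl : IsClosed K := by
    have : K = {v : EuclideanSpace ℝ (Fin n) | ‖v‖ = 1} ∩ {v : EuclideanSpace ℝ (Fin n) | ε * ‖projS T v‖ ≤ ‖projS Tᗮ v‖} := rfl
    rw [this]
    exact (isClosed_eq continuous_norm continuous_const).inter
      (isClosed_le (continuous_const.mul (projS_continuous T).norm)
        (projS_continuous Tᗮ).norm)
  have hKsph : K ⊆ sphere (0 : EuclideanSpace ℝ (Fin n)) 1 := fun v hv => by
    simp [mem_sphere_iff_norm, hv.1]
  have hKcpt : IsCompact K := (isCompact_sphere (0 : EuclideanSpace ℝ (Fin n)) 1).of_isClosed_subset hKcl hKsph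
  have hKv : ∀ v ∈ K, ∃ δ : ℝ, 0 < δ ∧
      upperDensity m ((μ.restrict A).restrict (ECone a v δ)) a = 0 := by
    intro v hv
    have hvT : v ∉ (T : Set (EuclideanSpace ℝ (Fin n))) := by
      intro hvT
      have h0 : projS Tᗮ v = 0 := (projS_orth_eq_zero_iff T v).2 hvT
      have h1' : projS T v = v := projS_eq_self T hvT
      have := hv.2
      rw [h0, h1', norm_zero, hv.1, mul_one] at this
      linarith
    have hvTan : v ∉ TanUpper m (μ.restrict A) a := fun hmem => hvT (h1 hmem)
    rw [TanUpper, mem_setOf_eq] at hvTan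
    push_neg at hvTan
    obtain ⟨δ, hδ, hud⟩ := hvTan
    exact ⟨δ, hδ, le_antisymm hud (zero_le)⟩
  choose! δ hδpos hδzero using hKv
  obtain ⟨t, ht⟩ := hKcpt.elim_nhds_subcover' (fun v hv => ball v (δ v))
    (fun v hv => ball_mem_nhds _ (hδpos v hv))
  -- each local piece tends to zero
  have hgi : ∀ i : K, Filter.Tendsto (fun r : ℝ =>
      ((μ.restrict A).restrict (ECone a (↑i) (δ ↑i))) (Metric.closedBall a r) /
        (ballVol m * ENNReal.ofReal (r ^ m))) (𝓝[>] (0 : ℝ)) (𝓝 0) := by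
    intro i
    have h0 : Filter.limsup (fun r : ℝ =>
        ((μ.restrict A).restrict (ECone a (↑i) (δ ↑i))) (Metric.closedBall a r) /
          (ballVol m * ENNReal.ofReal (r ^ m))) (𝓝[>] (0 : ℝ)) = 0 := hδzero ↑i i.2
    refine tendsto_of_liminf_eq_limsup ?_ h0
    refine le_antisymm ?_ (zero_le)
    rw [← h0]
    exact liminf_le_limsup
  have hsum : Filter.Tendsto (fun r : ℝ => ∑ i ∈ t,
      ((μ.restrict A).restrict (ECone a (↑i) (δ ↑i))) (Metric.closedBall a r) /
        (ballVol m * ENNReal.ofReal (r ^ m))) (𝓝[>] (0 : ℝ)) (𝓝 0) := by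
    have h := tendsto_finset_sum t (fun i _ => hgi i)
    simpa using h
  refine tendsto_of_tendsto_of_tendsto_of_le_of_le' tendsto_const_nhds hsum
    (Eventually.of_forall fun r => zero_le) (Eventually.of_forall fun r => ?_)
  -- pointwise bound
  have hcov : (A \ Xs) ∩ Metric.closedBall a r ⊆
      {a} ∪ ⋃ i ∈ t, (Metric.closedBall a r ∩ ECone a (↑i : EuclideanSpace ℝ (Fin n)) (δ ↑i) ∩ A) := by
    rintro z ⟨⟨hzA, hzX⟩, hzB⟩
    by_cases hza : z = a
    · exact Or.inl (by simp [hza])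
    refine Or.inr ?_
    have hnorm : 0 < ‖z - a‖ := norm_pos_iff.2 (sub_ne_zero.2 hza)
    set u : EuclideanSpace ℝ (Fin n) := ‖z - a‖⁻¹ • (z - a) with hu
    have huK : u ∈ K := by
      constructor
      · rw [hu, norm_smul, norm_inv, norm_norm, inv_mul_cancel₀ hnorm.ne']
      · have hx : ε * ‖projS T (z - a)‖ < ‖projS Tᗮ (z - a)‖ := not_le.1 hzX
        have h0 : (0 : ℝ) ≤ ‖z - a‖⁻¹ := by positivity
        rw [hu, projS_smul, projS_smul, norm_smul, norm_smul, norm_inv, norm_norm]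
        calc ε * (‖z - a‖⁻¹ * ‖projS T (z - a)‖)
            = ‖z - a‖⁻¹ * (ε * ‖projS T (z - a)‖) := by ring
          _ ≤ ‖z - a‖⁻¹ * ‖projS Tᗮ (z - a)‖ := by
              exact mul_le_mul_of_nonneg_left hx.le h0
    obtain ⟨i, hit, hiu⟩ := mem_iUnion₂.1 (ht huK)
    refine mem_biUnion hit ⟨⟨hzB, ?_⟩, hzA⟩
    exact ⟨‖z - a‖⁻¹, by positivity, by
      rw [← hu]
      have : dist u ↑i < δ ↑i := mem_ball.1 hiu
      rwa [dist_eq_norm] at this⟩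
  have hnum : μ ((A \ Xs) ∩ Metric.closedBall a r) ≤
      ∑ i ∈ t, ((μ.restrict A).restrict (ECone a (↑i : EuclideanSpace ℝ (Fin n)) (δ ↑i))) (Metric.closedBall a r) := by
    calc μ ((A \ Xs) ∩ Metric.closedBall a r)
        ≤ μ ({a} ∪ ⋃ i ∈ t, (Metric.closedBall a r ∩ ECone a (↑i : EuclideanSpace ℝ (Fin n)) (δ ↑i) ∩ A)) :=
          measure_mono hcov
      _ ≤ μ {a} + μ (⋃ i ∈ t, (Metric.closedBall a r ∩ ECone a (↑i : EuclideanSpace ℝ (Fin n)) (δ ↑i) ∩ A)) :=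
          measure_union_le _ _
      _ = μ (⋃ i ∈ t, (Metric.closedBall a r ∩ ECone a (↑i : EuclideanSpace ℝ (Fin n)) (δ ↑i) ∩ A)) := by
          rw [hμ, hausdorff_singleton hm a, zero_add]
      _ ≤ ∑ i ∈ t, μ (Metric.closedBall a r ∩ ECone a (↑i : EuclideanSpace ℝ (Fin n)) (δ ↑i) ∩ A) :=
          measure_biUnion_finset_le t _
      _ = ∑ i ∈ t, ((μ.restrict A).restrict (ECone a (↑i : EuclideanSpace ℝ (Fin n)) (δ ↑i))) (Metric.closedBall a r) := by
          refine Finset.sum_congr rfl fun i _ => ?_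
          rw [Measure.restrict_apply measurableSet_closedBall,
            Measure.restrict_apply (measurableSet_closedBall.inter
              (isOpen_ECone a (↑i : EuclideanSpace ℝ (Fin n)) (δ ↑i)).measurableSet)]
  calc μ ((A \ Xs) ∩ Metric.closedBall a r) / (ballVol m * ENNReal.ofReal (r ^ m))
      ≤ (∑ i ∈ t, ((μ.restrict A).restrict (ECone a (↑i : EuclideanSpace ℝ (Fin n)) (δ ↑i)))
          (Metric.closedBall a r)) / (ballVol m * ENNReal.ofReal (r ^ m)) :=
        ENNReal.div_le_div_right hnum _
    _ = ∑ i ∈ t, ((μ.restrict A).restrict (ECone a (↑i : EuclideanSpace ℝ (Fin n)) (δ ↑i)))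
          (Metric.closedBall a r) / (ballVol m * ENNReal.ofReal (r ^ m)) := by
        simp only [div_eq_mul_inv, Finset.sum_mul]

-- (3) → (2)

lemma key32 {m n : ℕ} (hm : 1 ≤ m) {A : Set (EuclideanSpace ℝ (Fin n))}
    {a : EuclideanSpace ℝ (Fin n)} {T : Submodule ℝ (EuclideanSpace ℝ (Fin n))}
    (h3 : ∀ ε : ℝ, 0 < ε → Filter.Tendsto (fun r : ℝ =>
        μH[(m : ℝ)] (A ∩ Metric.closedBall a r ∩ {z | ε * r < ‖projS Tᗮ (z - a)‖}) /
          (ballVol m * ENNReal.ofReal (r ^ m))) (𝓝[>] (0 : ℝ)) (𝓝 0))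
    {ε : ℝ} (hε : 0 < ε) :
    Filter.Tendsto (fun r : ℝ =>
        μH[(m : ℝ)] ((A \ {z | ‖projS Tᗮ (z - a)‖ ≤ ε * ‖projS T (z - a)‖}) ∩
            Metric.closedBall a r) / (ballVol m * ENNReal.ofReal (r ^ m)))
        (𝓝[>] (0 : ℝ)) (𝓝 0) := by
  classical
  set μ : Measure (EuclideanSpace ℝ (Fin n)) := μH[(m : ℝ)] with hμ
  set Xs : Set (EuclideanSpace ℝ (Fin n)) :=
    {z | ‖projS Tᗮ (z - a)‖ ≤ ε * ‖projS T (z - a)‖} with hXs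
  have hsq : 0 < Real.sqrt (1 + ε ^ 2) := Real.sqrt_pos.2 (by positivity)
  set c₀ : ℝ := ε / Real.sqrt (1 + ε ^ 2) with hc₀
  have hc₀pos : 0 < c₀ := div_pos hε hsq
  set c : ℝ := c₀ / 2 with hcdef
  have hc : 0 < c := by positivity
  rw [ENNReal.tendsto_nhds_zero]
  intro η hη
  have h3c := (ENNReal.tendsto_nhds_zero).1 (h3 c hc) (η / 2)
    (ENNReal.div_pos hη.ne' (by norm_num))
  obtain ⟨ρ, hρpos, hρ⟩ := mem_nhdsGT_iff_exists_Ioo_subset.1 h3c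
  filter_upwards [Ioo_mem_nhdsGT_of_mem (⟨le_refl (0:ℝ), hρpos⟩ : (0:ℝ) ∈ Ico (0:ℝ) ρ)]
    with r hr
  obtain ⟨hrpos, hrρ⟩ := hr
  -- the dyadic pieces
  set G : ℕ → ℝ≥0∞ := fun k =>
    μ (A ∩ Metric.closedBall a ((2⁻¹:ℝ) ^ k * r) ∩
      {z | c * ((2⁻¹:ℝ) ^ k * r) < ‖projS Tᗮ (z - a)‖}) with hG
  have hDne : ∀ s : ℝ, 0 < s → ballVol m * ENNReal.ofReal (s ^ m) ≠ 0 :=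
    fun s hs => mul_ne_zero (ballVol_ne_zero m) (ENNReal.ofReal_pos.2 (pow_pos hs m)).ne'
  have hDnt : ∀ s : ℝ, ballVol m * ENNReal.ofReal (s ^ m) ≠ ⊤ :=
    fun s => ENNReal.mul_ne_top (ballVol_ne_top m) ENNReal.ofReal_ne_top
  -- inclusion into annuli pieces
  have hsubset : (A \ Xs) ∩ Metric.closedBall a r ⊆
      {a} ∪ ⋃ k : ℕ, (A ∩ Metric.closedBall a ((2⁻¹:ℝ) ^ k * r) ∩
        {z | c * ((2⁻¹:ℝ) ^ k * r) < ‖projS Tᗮ (z - a)‖}) := by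
    rintro z ⟨⟨hzA, hzX⟩, hzB⟩
    by_cases hza : z = a
    · exact Or.inl (by simp [hza])
    refine Or.inr (mem_iUnion.2 ?_)
    have ht : 0 < ‖z - a‖ := norm_pos_iff.2 (sub_ne_zero.2 hza)
    have htr : ‖z - a‖ ≤ r := by rw [← dist_eq_norm]; exact hzB
    -- Pythagoras estimate
    have hx : ε * ‖projS T (z - a)‖ < ‖projS Tᗮ (z - a)‖ := not_le.1 hzX
    have hp := projS_pyth T (z - a)
    have h4 : (ε * ‖projS T (z - a)‖) ^ 2 < ‖projS Tᗮ (z - a)‖ ^ 2 := by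
      nlinarith [hx, mul_nonneg hε.le (norm_nonneg (projS T (z - a)))]
    have h2 : (ε * ‖z - a‖) ^ 2 < (Real.sqrt (1 + ε ^ 2) * ‖projS Tᗮ (z - a)‖) ^ 2 := by
      rw [mul_pow, mul_pow, Real.sq_sqrt (by positivity : (0:ℝ) ≤ 1 + ε ^ 2)]
      nlinarith [h4, hp, sq_nonneg ‖projS Tᗮ (z - a)‖]
    have h5 : ε * ‖z - a‖ < Real.sqrt (1 + ε ^ 2) * ‖projS Tᗮ (z - a)‖ :=
      lt_of_pow_lt_pow_left₀ 2 (by positivity) h2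
    have hPyth : c₀ * ‖z - a‖ < ‖projS Tᗮ (z - a)‖ := by
      rw [hc₀, div_mul_eq_mul_div, div_lt_iff₀ hsq]
      nlinarith [h5]
    -- choose the dyadic scale
    have hPex : ∃ k : ℕ, (2⁻¹:ℝ) ^ (k + 1) * r < ‖z - a‖ := by
      obtain ⟨k1, hk1⟩ := exists_pow_lt_of_lt_one (div_pos ht hrpos)
        (by norm_num : (2⁻¹:ℝ) < 1)
      refine ⟨k1, ?_⟩
      have h6 : (2⁻¹:ℝ) ^ (k1 + 1) < (2⁻¹:ℝ) ^ k1 :=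
        pow_lt_pow_right_of_lt_one₀ (by norm_num) (by norm_num) (Nat.lt_succ_self k1)
      have := (lt_div_iff₀ hrpos).1 (h6.trans hk1)
      linarith [this]
    set k₀ := Nat.find hPex with hk₀def
    have hk₀ : (2⁻¹:ℝ) ^ (k₀ + 1) * r < ‖z - a‖ := Nat.find_spec hPex
    have htle : ‖z - a‖ ≤ (2⁻¹:ℝ) ^ k₀ * r := by
      rcases Nat.eq_zero_or_pos k₀ with h0 | hpos
      · rw [h0]; simpa using htr
      · have hmin := Nat.find_min hPex (Nat.sub_lt hpos one_pos)
        have heq : k₀ - 1 + 1 = k₀ := Nat.succ_pred_eq_of_pos hpos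
        rw [heq] at hmin
        exact not_lt.1 hmin
    refine ⟨k₀, ⟨hzA, ?_⟩, ?_⟩
    · rw [mem_closedBall, dist_eq_norm]; exact htle
    · show c * ((2⁻¹:ℝ) ^ k₀ * r) < ‖projS Tᗮ (z - a)‖
      have he : c * ((2⁻¹:ℝ) ^ k₀ * r) = c₀ * ((2⁻¹:ℝ) ^ (k₀ + 1) * r) := by
        rw [hcdef, pow_succ]; ring
      rw [he]
      calc c₀ * ((2⁻¹:ℝ) ^ (k₀ + 1) * r) < c₀ * ‖z - a‖ :=
            mul_lt_mul_of_pos_left hk₀ hc₀pos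
        _ < ‖projS Tᗮ (z - a)‖ := hPyth
  -- measure bound
  have hbound : μ ((A \ Xs) ∩ Metric.closedBall a r) ≤ ∑' k : ℕ, G k := by
    calc μ ((A \ Xs) ∩ Metric.closedBall a r)
        ≤ μ ({a} ∪ ⋃ k : ℕ, (A ∩ Metric.closedBall a ((2⁻¹:ℝ) ^ k * r) ∩
            {z | c * ((2⁻¹:ℝ) ^ k * r) < ‖projS Tᗮ (z - a)‖})) := measure_mono hsubset
      _ ≤ μ {a} + μ (⋃ k : ℕ, (A ∩ Metric.closedBall a ((2⁻¹:ℝ) ^ k * r) ∩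
            {z | c * ((2⁻¹:ℝ) ^ k * r) < ‖projS Tᗮ (z - a)‖})) := measure_union_le _ _
      _ = μ (⋃ k : ℕ, (A ∩ Metric.closedBall a ((2⁻¹:ℝ) ^ k * r) ∩
            {z | c * ((2⁻¹:ℝ) ^ k * r) < ‖projS Tᗮ (z - a)‖})) := by
          rw [hμ, hausdorff_singleton hm a, zero_add]
      _ ≤ ∑' k : ℕ, G k := measure_iUnion_le _
  -- each dyadic piece is small
  have hGk : ∀ k : ℕ, G k ≤ η / 2 * (ballVol m * ENNReal.ofReal (((2⁻¹:ℝ) ^ k * r) ^ m)) := by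
    intro k
    have hspos : 0 < (2⁻¹:ℝ) ^ k * r := by positivity
    have hsle : (2⁻¹:ℝ) ^ k * r < ρ := by
      have h1 : (2⁻¹:ℝ) ^ k ≤ 1 := pow_le_one₀ (by norm_num) (by norm_num)
      nlinarith [h1, hrρ, hrpos]
    have hmem := hρ ⟨hspos, hsle⟩
    rw [mem_setOf_eq] at hmem
    exact (ENNReal.div_le_iff (hDne _ hspos) (hDnt _)).1 hmem
  -- geometric series bound
  set q : ℝ≥0∞ := ENNReal.ofReal ((2⁻¹:ℝ) ^ m) with hq
  have hofR : ∀ k : ℕ, ENNReal.ofReal (((2⁻¹:ℝ) ^ k * r) ^ m) =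
      q ^ k * ENNReal.ofReal (r ^ m) := by
    intro k
    rw [mul_pow, ← pow_mul, Nat.mul_comm, pow_mul,
      ENNReal.ofReal_mul (by positivity), ENNReal.ofReal_pow (by positivity)]
  have hqle : q ≤ 2⁻¹ := by
    have h1 : (2⁻¹:ℝ) ^ m ≤ 2⁻¹ := by
      calc (2⁻¹:ℝ) ^ m ≤ (2⁻¹:ℝ) ^ 1 :=
        pow_le_pow_of_le_one (by norm_num) (by norm_num) hm
      _ = 2⁻¹ := pow_one _
    calc q ≤ ENNReal.ofReal (2⁻¹:ℝ) := ENNReal.ofReal_le_ofReal h1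
      _ = 2⁻¹ := by rw [ENNReal.ofReal_inv_of_pos (by norm_num)]; norm_num
  have hgeom : (∑' k : ℕ, q ^ k) ≤ 2 := by
    rw [ENNReal.tsum_geometric]
    calc (1 - q)⁻¹ ≤ (1 - 2⁻¹)⁻¹ := ENNReal.inv_le_inv' (tsub_le_tsub_left hqle 1)
      _ = 2 := by simp [ENNReal.one_sub_inv_two]
  have htsum : (∑' k : ℕ, G k) ≤ η * (ballVol m * ENNReal.ofReal (r ^ m)) := by
    calc (∑' k : ℕ, G k)
        ≤ ∑' k : ℕ, η / 2 * (ballVol m * ENNReal.ofReal (((2⁻¹:ℝ) ^ k * r) ^ m)) :=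
          ENNReal.tsum_le_tsum hGk
      _ = ∑' k : ℕ, (η / 2 * (ballVol m * ENNReal.ofReal (r ^ m))) * q ^ k := by
          refine tsum_congr fun k => ?_
          rw [hofR k]; ring
      _ = (η / 2 * (ballVol m * ENNReal.ofReal (r ^ m))) * ∑' k : ℕ, q ^ k :=
          ENNReal.tsum_mul_left
      _ ≤ (η / 2 * (ballVol m * ENNReal.ofReal (r ^ m))) * 2 :=
          mul_le_mul_right hgeom _
      _ = (η / 2 * 2) * (ballVol m * ENNReal.ofReal (r ^ m)) := by ring
      _ = η * (ballVol m * ENNReal.ofReal (r ^ m)) := by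
          rw [ENNReal.div_mul_cancel (by norm_num) (by norm_num)]
  rw [ENNReal.div_le_iff (hDne r hrpos) (hDnt r)]
  exact hbound.trans htsum

end facts

theorem stmt7 {m n : ℕ} (hm : 1 ≤ m) (hmn : m ≤ n)
    (A : Set (EuclideanSpace ℝ (Fin n))) (a : EuclideanSpace ℝ (Fin n))
    (T : Submodule ℝ (EuclideanSpace ℝ (Fin n))) (hT : Module.finrank ℝ T = m) :
    ((TanUpper m (μH[(m : ℝ)].restrict A) a ⊆ (T : Set (EuclideanSpace ℝ (Fin n)))) ↔
      (∀ ε : ℝ, 0 < ε → Filter.Tendsto (fun r : ℝ =>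
        μH[(m : ℝ)] ((A \ {z | ‖projS Tᗮ (z - a)‖ ≤ ε * ‖projS T (z - a)‖}) ∩
            Metric.closedBall a r) / (ballVol m * ENNReal.ofReal (r ^ m)))
        (𝓝[>] (0 : ℝ)) (𝓝 0))) ∧
    ((∀ ε : ℝ, 0 < ε → Filter.Tendsto (fun r : ℝ =>
        μH[(m : ℝ)] ((A \ {z | ‖projS Tᗮ (z - a)‖ ≤ ε * ‖projS T (z - a)‖}) ∩
            Metric.closedBall a r) / (ballVol m * ENNReal.ofReal (r ^ m)))
        (𝓝[>] (0 : ℝ)) (𝓝 0)) ↔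
      (∀ ε : ℝ, 0 < ε → Filter.Tendsto (fun r : ℝ =>
        μH[(m : ℝ)] (A ∩ Metric.closedBall a r ∩ {z | ε * r < ‖projS Tᗮ (z - a)‖}) /
          (ballVol m * ENNReal.ofReal (r ^ m))) (𝓝[>] (0 : ℝ)) (𝓝 0))) := by
  refine ⟨⟨fun h1 ε hε => key12 hm h1 hε, fun h2 => key21 h2⟩,
    fun h2 ε hε => key23 hε (h2 ε hε), fun h3 ε hε => key32 hm h3 hε⟩
end

section
/- Suppose $1 \leq m \leq n$ are integers, $\gamma > 0$, $A, B \subseteq \mathbb{R}^n$ with $0 \in \mathrm{Clos}\,B$, and $f : \mathbb{R}^n \to \mathbb{R}^n$ is a bijection with $f(0) = 0$ such that both $f$ and $f^{-1}$ are locally Lipschitz. Then for every $\epsilon > 0$, $\lim_{r\to 0} \frac{\mathcal{H}^m(A \cap \mathbf{B}(0,r) \cap \{z : \delta_B(z) > \epsilon r^\gamma\})}{\alpha(m) r^m} = 0$ holds if and only if for every $\epsilon > 0$, $\lim_{r\to 0} \frac{\mathcal{H}^m(f[A] \cap \mathbf{B}(0,r) \cap \{z : \delta_{f[B]}(z) >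 \epsilon r^\gamma\})}{\alpha(m) r^m} = 0$. -/
open MeasureTheory Metric Filter Set
open scoped ENNReal Topology

private lemma key_aux {n m : ℕ} {γ : ℝ} (hγ : 0 < γ)
    (A B : Set (EuclideanSpace ℝ (Fin n))) (hB : (0 : EuclideanSpace ℝ (Fin n)) ∈ closure B)
    (f g : EuclideanSpace ℝ (Fin n) → EuclideanSpace ℝ (Fin n))
    (hfg : Function.LeftInverse g f)
    (hf : LocallyLipschitz f) (hg : LocallyLipschitz g)
    (hf0 : f 0 = 0)
    (H : ∀ ε : ℝ, 0 < ε → Filter.Tendsto (fun r : ℝ =>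
        μH[(m : ℝ)] (A ∩ Metric.closedBall 0 r ∩ {z | ε * r ^ γ < Metric.infDist z B}) /
          (ballVol m * ENNReal.ofReal (r ^ m))) (𝓝[>] (0 : ℝ)) (𝓝 0)) :
    ∀ ε : ℝ, 0 < ε → Filter.Tendsto (fun r : ℝ =>
        μH[(m : ℝ)] ((f '' A) ∩ Metric.closedBall 0 r ∩
            {z | ε * r ^ γ < Metric.infDist z (f '' B)}) /
          (ballVol m * ENNReal.ofReal (r ^ m))) (𝓝[>] (0 : ℝ)) (𝓝 0) := by
  classical
  have hg0 : g 0 = 0 := by have := hfg 0; rwa [hf0] at this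
  have hBne : B.Nonempty := by
    rcases closure_nonempty_iff.1 ⟨0, hB⟩ with h; exact h
  obtain ⟨Kf, tf, htf, hKf⟩ := hf 0
  obtain ⟨Kg, tg, htg, hKg⟩ := hg 0
  obtain ⟨Rf, hRf, hRfs⟩ := Metric.mem_nhds_iff.1 htf
  obtain ⟨Rg, hRg, hRgs⟩ := Metric.mem_nhds_iff.1 htg
  set L : NNReal := max 1 (max Kf Kg) with hLdef
  set R : ℝ := min Rf Rg with hRdef
  have hR : 0 < R := lt_min hRf hRg
  have hL1 : (1 : ℝ) ≤ (L : ℝ) := by exact_mod_cast le_max_left 1 (max Kf Kg)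
  have hLpos : (0 : ℝ) < (L : ℝ) := lt_of_lt_of_le one_pos hL1
  have hKfL : (Kf : NNReal) ≤ L := (le_max_left Kf Kg).trans (le_max_right _ _)
  have hKgL : (Kg : NNReal) ≤ L := (le_max_right Kf Kg).trans (le_max_right _ _)
  have hfL : LipschitzOnWith L f (Metric.ball 0 R) := by
    refine LipschitzOnWith.of_dist_le_mul fun x hx y hy => ?_
    have hx' : x ∈ tf := hRfs (Metric.ball_subset_ball (min_le_left Rf Rg) hx)
    have hy' : y ∈ tf := hRfs (Metric.ball_subset_ball (min_le_left Rf Rg) hy)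
    exact (hKf.dist_le_mul x hx' y hy').trans
      (mul_le_mul_of_nonneg_right (by exact_mod_cast hKfL) dist_nonneg)
  have hgL : LipschitzOnWith L g (Metric.ball 0 R) := by
    refine LipschitzOnWith.of_dist_le_mul fun x hx y hy => ?_
    have hx' : x ∈ tg := hRgs (Metric.ball_subset_ball (min_le_right Rf Rg) hx)
    have hy' : y ∈ tg := hRgs (Metric.ball_subset_ball (min_le_right Rf Rg) hy)
    exact (hKg.dist_le_mul x hx' y hy').trans
      (mul_le_mul_of_nonneg_right (by exact_mod_cast hKgL) dist_nonneg)
  intro ε hε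
  set c : ℝ := (L : ℝ) with hcdef
  have hc1 : (1 : ℝ) ≤ c := hL1
  have hcpos : (0 : ℝ) < c := hLpos
  have hcpow : (0 : ℝ) < c ^ (1 + γ) := Real.rpow_pos_of_pos hcpos _
  set δ : ℝ := ε / (2 * c ^ (1 + γ)) with hδdef
  have hδ : 0 < δ := div_pos hε (by positivity)
  -- the key real identity
  have hkey : ∀ r : ℝ, 0 < r → c * (2 * δ * (c * r) ^ γ) = ε * r ^ γ := by
    intro r hr
    have h1 : (c * r) ^ γ = c ^ γ * r ^ γ :=
      Real.mul_rpow hcpos.le hr.le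
    have h2 : c ^ (1 + γ) = c * c ^ γ := by
      rw [Real.rpow_add hcpos, Real.rpow_one]
    rw [h1, hδdef, h2]
    field_simp
  -- eventual smallness
  have hmul : Filter.Tendsto (fun r : ℝ => c * r) (𝓝[>] (0 : ℝ)) (𝓝[>] (0 : ℝ)) := by
    apply tendsto_nhdsWithin_of_tendsto_nhds_of_eventually_within
    · have : Filter.Tendsto (fun r : ℝ => c * r) (𝓝 (0 : ℝ)) (𝓝 (c * 0)) :=
        (continuous_const.mul continuous_id).tendsto 0
      simpa using this.mono_left nhdsWithin_le_nhds
    · filter_upwards [self_mem_nhdsWithin] with r hr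
      exact mul_pos hcpos hr
  have hrpow : Filter.Tendsto (fun r : ℝ => (c * r) ^ γ) (𝓝[>] (0 : ℝ)) (𝓝 0) := by
    have h0 : Filter.Tendsto (fun s : ℝ => s ^ γ) (𝓝 (0 : ℝ)) (𝓝 ((0 : ℝ) ^ γ)) :=
      (Real.continuousAt_rpow_const 0 γ (Or.inr hγ.le)).tendsto
    rw [Real.zero_rpow hγ.ne'] at h0
    exact h0.comp (hmul.mono_right nhdsWithin_le_nhds)
  have hφ : Filter.Tendsto (fun r : ℝ => c * r + 2 * δ * (c * r) ^ γ)
      (𝓝[>] (0 : ℝ)) (𝓝 0) := by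
    have h1 := (hmul.mono_right nhdsWithin_le_nhds).add
      ((hrpow.const_mul (2 * δ)))
    simpa using h1
  have hsmall : ∀ᶠ r in 𝓝[>] (0 : ℝ), c * r + 2 * δ * (c * r) ^ γ < R :=
    hφ.eventually_lt_const hR
  -- constants
  set P : ℝ≥0∞ := (L : ℝ≥0∞) ^ m with hPdef
  have hL0' : (L : ℝ≥0∞) ≠ 0 :=
    ENNReal.coe_ne_zero.2 (zero_lt_one.trans_le (le_max_left 1 (max Kf Kg))).ne'
  have hP0 : P ≠ 0 := pow_ne_zero _ hL0'
  have hPtop : P ≠ ∞ := ENNReal.pow_ne_top ENNReal.coe_ne_top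
  have hmR : (0 : ℝ) ≤ (m : ℝ) := Nat.cast_nonneg m
  -- the eventual bound
  have hbound : ∀ᶠ r in 𝓝[>] (0 : ℝ),
      μH[(m : ℝ)] ((f '' A) ∩ Metric.closedBall 0 r ∩
          {z | ε * r ^ γ < Metric.infDist z (f '' B)}) /
        (ballVol m * ENNReal.ofReal (r ^ m))
      ≤ (P * P) *
        (μH[(m : ℝ)] (A ∩ Metric.closedBall 0 (c * r) ∩
            {z | δ * (c * r) ^ γ < Metric.infDist z B}) /
          (ballVol m * ENNReal.ofReal ((c * r) ^ m))) := by
    filter_upwards [self_mem_nhdsWithin, hsmall] with r hr hrs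
    have hr0 : (0 : ℝ) < r := hr
    have hcr0 : (0 : ℝ) < c * r := mul_pos hcpos hr0
    have hrpow0 : (0 : ℝ) < (c * r) ^ γ := Real.rpow_pos_of_pos hcr0 _
    have hcrR : c * r < R :=
      lt_of_le_of_lt (le_add_of_nonneg_right (by positivity)) hrs
    have hrR : r < R := lt_of_le_of_lt (le_mul_of_one_le_left hr0.le hc1) hcrR
    set S : Set (EuclideanSpace ℝ (Fin n)) :=
      A ∩ Metric.closedBall 0 (c * r) ∩ {z | δ * (c * r) ^ γ < Metric.infDist z B} with hSdef
    -- the inclusion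
    have hsub : (f '' A) ∩ Metric.closedBall 0 r ∩
        {z | ε * r ^ γ < Metric.infDist z (f '' B)} ⊆ f '' S := by
      rintro z ⟨⟨⟨a, ha, rfl⟩, hz1⟩, hz2⟩
      have hfa : g (f a) = a := hfg a
      have hfamem : f a ∈ Metric.ball (0 : EuclideanSpace ℝ (Fin n)) R := by
        rw [Metric.mem_ball]
        exact lt_of_le_of_lt (Metric.mem_closedBall.1 hz1) hrR
      have h0mem : (0 : EuclideanSpace ℝ (Fin n)) ∈ Metric.ball (0 : EuclideanSpace ℝ (Fin n)) R :=
        Metric.mem_ball_self hR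
      have hadist : dist a 0 ≤ c * r := by
        have := hgL.dist_le_mul (f a) hfamem 0 h0mem
        rw [hfa, hg0] at this
        calc dist a 0 ≤ (L : ℝ) * dist (f a) 0 := this
          _ ≤ c * r := by
              apply mul_le_mul_of_nonneg_left _ hcpos.le
              exact Metric.mem_closedBall.1 hz1
      have hamem : a ∈ Metric.ball (0 : EuclideanSpace ℝ (Fin n)) R :=
        Metric.mem_ball.2 (lt_of_le_of_lt hadist hcrR)
      refine ⟨a, ⟨⟨ha, Metric.mem_closedBall.2 hadist⟩, ?_⟩, rfl⟩
      show δ * (c * r) ^ γ < Metric.infDist a B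
      by_contra hcon
      push_neg at hcon
      have hlt : Metric.infDist a B < 2 * δ * (c * r) ^ γ :=
        lt_of_le_of_lt hcon (by nlinarith)
      obtain ⟨b, hb, hab⟩ := (Metric.infDist_lt_iff hBne).1 hlt
      have hbmem : b ∈ Metric.ball (0 : EuclideanSpace ℝ (Fin n)) R := by
        rw [Metric.mem_ball]
        calc dist b 0 ≤ dist b a + dist a 0 := dist_triangle b a 0
          _ < 2 * δ * (c * r) ^ γ + c * r := by
              rw [dist_comm b a]; exact add_lt_add_of_lt_of_le hab hadist
          _ = c * r + 2 * δ * (c * r) ^ γ := by ring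
          _ < R := hrs
      have hd : dist (f a) (f b) < ε * r ^ γ := by
        calc dist (f a) (f b) ≤ (L : ℝ) * dist a b := hfL.dist_le_mul a hamem b hbmem
          _ < c * (2 * δ * (c * r) ^ γ) := by
              exact mul_lt_mul_of_pos_left hab hcpos
          _ = ε * r ^ γ := hkey r hr0
      have : Metric.infDist (f a) (f '' B) ≤ dist (f a) (f b) :=
        Metric.infDist_le_dist_of_mem ⟨b, hb, rfl⟩
      have hcontra : Metric.infDist (f a) (f '' B) < ε * r ^ γ := lt_of_le_of_lt this hd
      exact absurd hz2 (not_lt.2 hcontra.le)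
    have hSsub : S ⊆ Metric.ball (0 : EuclideanSpace ℝ (Fin n)) R := by
      rintro x ⟨⟨-, hx⟩, -⟩
      exact Metric.mem_ball.2 (lt_of_le_of_lt (Metric.mem_closedBall.1 hx) hcrR)
    have h1 : μH[(m : ℝ)] ((f '' A) ∩ Metric.closedBall 0 r ∩
        {z | ε * r ^ γ < Metric.infDist z (f '' B)}) ≤ μH[(m : ℝ)] (f '' S) :=
      measure_mono hsub
    have h2 : μH[(m : ℝ)] (f '' S) ≤ P * μH[(m : ℝ)] S := by
      have := (hfL.mono hSsub).hausdorffMeasure_image_le hmR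
      rwa [ENNReal.rpow_natCast] at this
    have hden : ballVol m * ENNReal.ofReal ((c * r) ^ m)
        = P * (ballVol m * ENNReal.ofReal (r ^ m)) := by
      have hcm : ENNReal.ofReal (c ^ m) = P := by
        rw [hPdef, ← ENNReal.coe_pow, ← ENNReal.ofReal_coe_nnreal]
        norm_cast
      rw [mul_pow, ENNReal.ofReal_mul (by positivity), hcm]
      ring
    calc μH[(m : ℝ)] ((f '' A) ∩ Metric.closedBall 0 r ∩
          {z | ε * r ^ γ < Metric.infDist z (f '' B)}) /
        (ballVol m * ENNReal.ofReal (r ^ m))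
        ≤ (P * μH[(m : ℝ)] S) / (ballVol m * ENNReal.ofReal (r ^ m)) :=
          ENNReal.div_le_div_right (h1.trans h2) _
      _ = (P * P) * (μH[(m : ℝ)] S / (ballVol m * ENNReal.ofReal ((c * r) ^ m))) := by
          rw [hden, ← mul_div_assoc, mul_assoc,
            ENNReal.mul_div_mul_left _ _ hP0 hPtop]
  -- conclude by squeezing
  have hH := H δ hδ
  have hcomp : Filter.Tendsto (fun r : ℝ =>
      μH[(m : ℝ)] (A ∩ Metric.closedBall 0 (c * r) ∩
          {z | δ * (c * r) ^ γ < Metric.infDist z B}) /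
        (ballVol m * ENNReal.ofReal ((c * r) ^ m))) (𝓝[>] (0 : ℝ)) (𝓝 0) :=
    hH.comp hmul
  have hCmul : Filter.Tendsto (fun r : ℝ => (P * P) *
      (μH[(m : ℝ)] (A ∩ Metric.closedBall 0 (c * r) ∩
          {z | δ * (c * r) ^ γ < Metric.infDist z B}) /
        (ballVol m * ENNReal.ofReal ((c * r) ^ m)))) (𝓝[>] (0 : ℝ)) (𝓝 0) := by
    have := ENNReal.Tendsto.const_mul hcomp
      (Or.inr (ENNReal.mul_ne_top hPtop hPtop))
    simpa using this
  exact tendsto_of_tendsto_of_tendsto_of_le_of_le' tendsto_const_nhds hCmul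
    (Filter.Eventually.of_forall fun _ => zero_le) hbound

theorem stmt9 {m n : ℕ} (hm : 1 ≤ m) (hmn : m ≤ n) (γ : ℝ) (hγ : 0 < γ)
    (A B : Set (EuclideanSpace ℝ (Fin n))) (hB : (0 : EuclideanSpace ℝ (Fin n)) ∈ closure B)
    (f g : EuclideanSpace ℝ (Fin n) → EuclideanSpace ℝ (Fin n))
    (hfg : Function.LeftInverse g f) (hgf : Function.RightInverse g f)
    (hf : LocallyLipschitz f) (hg : LocallyLipschitz g)
    (hf0 : f 0 = 0) :
    (∀ ε : ℝ, 0 < ε → Filter.Tendsto (fun r : ℝ =>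
        μH[(m : ℝ)] (A ∩ Metric.closedBall 0 r ∩ {z | ε * r ^ γ < Metric.infDist z B}) /
          (ballVol m * ENNReal.ofReal (r ^ m))) (𝓝[>] (0 : ℝ)) (𝓝 0)) ↔
    (∀ ε : ℝ, 0 < ε → Filter.Tendsto (fun r : ℝ =>
        μH[(m : ℝ)] ((f '' A) ∩ Metric.closedBall 0 r ∩
            {z | ε * r ^ γ < Metric.infDist z (f '' B)}) /
          (ballVol m * ENNReal.ofReal (r ^ m))) (𝓝[>] (0 : ℝ)) (𝓝 0)) := by
  have hg0 : g 0 = 0 := by have := hfg 0; rwa [hf0] at this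
  constructor
  · intro H
    exact key_aux hγ A B hB f g hfg hf hg hf0 H
  · intro H
    have hclos : (0 : EuclideanSpace ℝ (Fin n)) ∈ closure (f '' B) := by
      have := map_mem_closure hf.continuous hB (mapsTo_image f B)
      rwa [hf0] at this
    have h2 := key_aux hγ (f '' A) (f '' B) hclos g f hgf hg hf hg0 H
    intro ε hε
    have := h2 ε hε
    rwa [hfg.image_image, hfg.image_image] at this
end

section
/- Let $B \subseteq \mathbb{R}^n$, $a \in \mathrm{Clos}\,B$, and $M = \{a + v : v \in \mathrm{Tan}^*(B,a)\}$. Then $\lim_{r\to 0} r^{-1} \sup\{\delta_M(x) : x \in \mathbf{B}(a,r) \cap B\} = 0$. -/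
open MeasureTheory Metric Filter Set
open scoped ENNReal Topology

variable {X : Type*} [NormedAddCommGroup X] [NormedSpace ℝ X]

/-- The upper tangent cone `Tan^*(B,a)`: the set of `v` with
`liminf_{r→0+} r⁻¹ δ_B(a+rv) = 0`. -/
def TanStarPt (B : Set X) (a : X) : Set X :=
  {v | ∀ ε : ℝ, 0 < ε → ∃ᶠ r in 𝓝[>] (0 : ℝ), Metric.infDist (a + r • v) B < ε * r}

/-- The lower tangent cone `Tan_*(B,a)`: the set of `v` with
`lim_{r→0+} r⁻¹ δ_B(a+rv) = 0`. -/
def TanLowerPt (B : Set X) (a : X) : Set X :=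
  {v | ∀ ε : ℝ, 0 < ε → ∀ᶠ r in 𝓝[>] (0 : ℝ), Metric.infDist (a + r • v) B < ε * r}

lemma smul_mem_tanStarPt {B : Set X} {a : X} {v : X} (hv : v ∈ TanStarPt B a)
    {c : ℝ} (hc : 0 < c) : c • v ∈ TanStarPt B a := by
  intro ε hε
  have h := hv (ε / c) (by positivity)
  have ht : Tendsto (fun s : ℝ => s / c) (𝓝[>] 0) (𝓝[>] 0) := by
    apply tendsto_nhdsWithin_of_tendsto_nhds_of_eventually_within
    · have : Tendsto (fun s : ℝ => s / c) (𝓝 0) (𝓝 (0 / c)) :=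
        tendsto_id.div_const c
      simpa using this.mono_left nhdsWithin_le_nhds
    · filter_upwards [self_mem_nhdsWithin] with s hs
      exact div_pos hs hc
  refine ht.frequently (h.mp ?_)
  filter_upwards [self_mem_nhdsWithin] with s hs h1
  have h2 : (s / c) • (c • v) = s • v := by
    rw [smul_smul, div_mul_cancel₀ _ hc.ne']
  rw [h2]
  calc Metric.infDist (a + s • v) B < ε / c * s := h1
    _ = ε * (s / c) := by ring

theorem stmt13 {n : ℕ} (B : Set (EuclideanSpace ℝ (Fin n)))
    (a : EuclideanSpace ℝ (Fin n)) (ha : a ∈ closure B)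
    (M : Set (EuclideanSpace ℝ (Fin n))) (hM : M = (fun v => a + v) '' TanStarPt B a) :
    ∀ ε : ℝ, 0 < ε → ∀ᶠ r in 𝓝[>] (0 : ℝ),
      ∀ x ∈ B ∩ Metric.closedBall a r, Metric.infDist x M ≤ ε * r := by
  by_contra hcon
  push_neg at hcon
  obtain ⟨ε, hε, hfreq⟩ := hcon
  have hfreq' : ∃ᶠ r in 𝓝[>] (0 : ℝ),
      (∃ x ∈ B ∩ Metric.closedBall a r, ε * r < Metric.infDist x M) ∧ 0 < r := by
    refine (hfreq.and_eventually self_mem_nhdsWithin).mono ?_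
    rintro r ⟨h1, h2⟩
    exact ⟨h1, h2⟩
  obtain ⟨r, hrt, hr⟩ := Filter.exists_seq_forall_of_frequently hfreq'
  have hrpos : ∀ k, 0 < r k := fun k => (hr k).2
  choose x hxB hxd using fun k => (hr k).1
  set v : ℕ → EuclideanSpace ℝ (Fin n) := fun k => (r k)⁻¹ • (x k - a) with hvdef
  have hvball : ∀ k, v k ∈ Metric.closedBall (0 : EuclideanSpace ℝ (Fin n)) 1 := by
    intro k
    rw [mem_closedBall_zero_iff, hvdef]
    have : ‖x k - a‖ ≤ r k := by
      have := (hxB k).2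
      rwa [Metric.mem_closedBall, dist_eq_norm] at this
    rw [norm_smul, norm_inv, Real.norm_eq_abs, abs_of_pos (hrpos k)]
    calc (r k)⁻¹ * ‖x k - a‖ ≤ (r k)⁻¹ * r k := by
          apply mul_le_mul_of_nonneg_left this (inv_nonneg.mpr (hrpos k).le)
      _ = 1 := inv_mul_cancel₀ (hrpos k).ne'
  obtain ⟨v0, hv0mem, φ, hφ, hconv⟩ :=
    (isCompact_closedBall (0 : EuclideanSpace ℝ (Fin n)) 1).tendsto_subseq hvball
  have hrφ : Tendsto (fun k => r (φ k)) atTop (𝓝[>] (0 : ℝ)) :=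
    hrt.comp hφ.tendsto_atTop
  have hsmul : ∀ k, (r k) • v k = x k - a := fun k =>
    smul_inv_smul₀ (hrpos k).ne' _
  have hdistv : Tendsto (fun k => ‖v (φ k) - v0‖) atTop (𝓝 0) := by
    have := hconv
    rw [tendsto_iff_norm_sub_tendsto_zero] at this
    exact this
  have hdist : ∀ k, dist (x (φ k)) (a + r (φ k) • v0) = r (φ k) * ‖v (φ k) - v0‖ := by
    intro k
    rw [dist_eq_norm]
    have : x (φ k) - (a + r (φ k) • v0) = r (φ k) • (v (φ k) - v0) := by
      rw [smul_sub, hsmul]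
      abel
    rw [this, norm_smul, Real.norm_eq_abs, abs_of_pos (hrpos (φ k))]
  have hv0 : v0 ∈ TanStarPt B a := by
    intro δ hδ
    refine hrφ.frequently (Filter.Eventually.frequently ?_)
    have hev : ∀ᶠ k in atTop, ‖v (φ k) - v0‖ < δ :=
      hdistv.eventually (eventually_lt_nhds hδ) |>.mono (by simp)
    filter_upwards [hev] with k hk
    calc Metric.infDist (a + r (φ k) • v0) B ≤ dist (a + r (φ k) • v0) (x (φ k)) :=
          Metric.infDist_le_dist_of_mem (hxB (φ k)).1
      _ = r (φ k) * ‖v (φ k) - v0‖ := by rw [dist_comm]; exact hdist k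
      _ < r (φ k) * δ := by
          exact mul_lt_mul_of_pos_left hk (hrpos (φ k))
      _ = δ * r (φ k) := mul_comm _ _
  -- final contradiction
  obtain ⟨k, hk⟩ := (hdistv.eventually (eventually_lt_nhds hε)).exists
  have hmem : a + r (φ k) • v0 ∈ M := by
    rw [hM]
    exact ⟨r (φ k) • v0, smul_mem_tanStarPt hv0 (hrpos (φ k)), rfl⟩
  have : Metric.infDist (x (φ k)) M ≤ r (φ k) * ‖v (φ k) - v0‖ := by
    rw [← hdist k]
    exact Metric.infDist_le_dist_of_mem hmem
  have hlt : Metric.infDist (x (φ k)) M < ε * r (φ k) := by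
    calc Metric.infDist (x (φ k)) M ≤ r (φ k) * ‖v (φ k) - v0‖ := this
      _ < r (φ k) * ε := mul_lt_mul_of_pos_left hk (hrpos (φ k))
      _ = ε * r (φ k) := mul_comm _ _
  exact absurd (hxd (φ k)) (not_lt.mpr hlt.le)
end

section
/- Let $B \subseteq \mathbb{R}^n$, $a \in \mathrm{Clos}\,B$, and $M = \{a + v : v \in \mathrm{Tan}_*(B,a)\}$. Then $\lim_{r\to 0} r^{-1} \sup\{\delta_B(x) : x \in \mathbf{B}(a,r) \cap M\} = 0$. -/
open MeasureTheory Metric Filter Set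
open scoped ENNReal Topology Uniformity

variable {X : Type*} [NormedAddCommGroup X] [NormedSpace ℝ X]

lemma tanLowerPt_smul {B : Set X} {a : X} {v : X} {c : ℝ}
    (hv : v ∈ TanLowerPt B a) (hc : 0 < c) : c • v ∈ TanLowerPt B a := by
  intro ε hε
  have h := hv (ε / c) (by positivity)
  have hmap : Tendsto (fun r : ℝ => r * c) (𝓝[>] 0) (𝓝[>] 0) := by
    apply tendsto_nhdsWithin_of_tendsto_nhds_of_eventually_within
    · have h0 : Tendsto (fun r : ℝ => r * c) (𝓝 0) (𝓝 0) := by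
        have := (continuous_mul_right c).tendsto (0:ℝ)
        simpa using this
      exact h0.mono_left nhdsWithin_le_nhds
    · filter_upwards [self_mem_nhdsWithin] with r hr
      exact mul_pos hr hc
  filter_upwards [hmap.eventually h, self_mem_nhdsWithin] with r hr hrpos
  have hsm : (r * c) • v = r • (c • v) := by rw [smul_smul]
  rw [hsm] at hr
  have : ε / c * (r * c) = ε * r := by field_simp
  linarith [hr, this.symm.le]

theorem stmt14 {n : ℕ} (B : Set (EuclideanSpace ℝ (Fin n)))
    (a : EuclideanSpace ℝ (Fin n)) (ha : a ∈ closure B)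
    (M : Set (EuclideanSpace ℝ (Fin n))) (hM : M = (fun v => a + v) '' TanLowerPt B a) :
    ∀ ε : ℝ, 0 < ε → ∀ᶠ r in 𝓝[>] (0 : ℝ),
      ∀ x ∈ M ∩ Metric.closedBall a r, Metric.infDist x B ≤ ε * r := by
  intro ε hε
  -- K : tangent vectors of norm ≤ 1
  set K : Set (EuclideanSpace ℝ (Fin n)) := TanLowerPt B a ∩ Metric.closedBall 0 1 with hK
  have hKtb : TotallyBounded K :=
    (isCompact_closedBall (0 : EuclideanSpace ℝ (Fin n)) 1).totallyBounded.subset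
      (Set.inter_subset_right)
  have hd : {p : EuclideanSpace ℝ (Fin n) × EuclideanSpace ℝ (Fin n) | dist p.1 p.2 < ε / 2}
      ∈ 𝓤 (EuclideanSpace ℝ (Fin n)) := Metric.dist_mem_uniformity (by positivity)
  obtain ⟨t, htK, htfin, hcover⟩ := (totallyBounded_iff_subset.1 hKtb) _ hd
  have hev : ∀ᶠ r in 𝓝[>] (0:ℝ), ∀ v ∈ t, Metric.infDist (a + r • v) B < ε / 2 * r := by
    rw [htfin.eventually_all]
    intro v hv
    exact (htK hv).1 (ε / 2) (by positivity)
  filter_upwards [hev, self_mem_nhdsWithin] with r hr hrpos x hx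
  rw [hM] at hx
  obtain ⟨⟨v, hvT, rfl⟩, hxball⟩ := hx
  simp only [] at hxball ⊢
  have hrpos' : (0:ℝ) < r := hrpos
  have hvnorm : ‖v‖ ≤ r := by
    have := Metric.mem_closedBall.1 hxball
    simpa [dist_eq_norm] using this
  set w := r⁻¹ • v with hw
  have hwT : w ∈ TanLowerPt B a := tanLowerPt_smul hvT (by positivity)
  have hwK : w ∈ K := by
    refine ⟨hwT, ?_⟩
    simp only [Metric.mem_closedBall, dist_zero_right, hw, norm_smul, norm_inv,
      Real.norm_eq_abs, abs_of_pos hrpos']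
    calc r⁻¹ * ‖v‖ ≤ r⁻¹ * r := by
          exact mul_le_mul_of_nonneg_left hvnorm (by positivity)
      _ = 1 := inv_mul_cancel₀ hrpos'.ne'
  obtain ⟨u, hu, hwu⟩ := by
    have := hcover hwK
    simpa using this
  have key : a + v = a + r • w := by
    rw [hw, smul_inv_smul₀ hrpos'.ne']
  rw [key]
  have h1 : Metric.infDist (a + r • w) B ≤
      Metric.infDist (a + r • u) B + dist (a + r • w) (a + r • u) :=
    Metric.infDist_le_infDist_add_dist
  have h2 : dist (a + r • w) (a + r • u) = r * dist w u := by
    simp only [dist_eq_norm]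
    have : a + r • w - (a + r • u) = r • (w - u) := by rw [smul_sub]; abel
    rw [this, norm_smul, Real.norm_eq_abs, abs_of_pos hrpos']
  have h3 : Metric.infDist (a + r • u) B < ε / 2 * r := hr u hu
  have h4 : r * dist w u ≤ r * (ε / 2) :=
    mul_le_mul_of_nonneg_left hwu.le hrpos'.le
  calc Metric.infDist (a + r • w) B ≤ Metric.infDist (a + r • u) B + r * dist w u := by
        rw [← h2]; exact h1
    _ ≤ ε / 2 * r + r * (ε / 2) := by linarith
    _ = ε * r := by ring
end

section
/- Let $A$ be a submanifold of $\mathbb{R}^n$ of class $C^2$, $a \in A$, $\nu \in \mathbb{S}^{n-1}$, and $0 < r < \infty$, and suppose the open ball $\mathbf{U}(a + r\nu, r)$ is disjoint from $A$. Then the second fundamental form satisfies $\mathbf{b}_A(a)(v,v) \bullet \nu \leq r^{-1}|v|^2$ for every $v \in \mathrm{Tan}(A,a)$. -/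
open Metric Filter Set
open scoped Topology RealInnerProductSpace

lemma aux_second_deriv_nonneg {g : ℝ → ℝ} (hg : ContDiff ℝ 2 g)
    (h0 : g 0 = 0) (h1 : deriv g 0 = 0)
    (hnn : ∀ᶠ t in 𝓝[>] (0:ℝ), 0 ≤ g t) : 0 ≤ deriv (deriv g) 0 := by
  have hg2 : ContDiff ℝ (1 + 1 : ℕ) g := by exact_mod_cast hg
  have h2 : ContDiff ℝ 1 (deriv g) := ((contDiff_succ_iff_deriv).1 hg2).2.2
  have hd1 : Differentiable ℝ g := hg.differentiable (by norm_num)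
  have hd2 : Differentiable ℝ (deriv g) := h2.differentiable one_ne_zero
  have hc2 : Continuous (deriv (deriv g)) := (contDiff_one_iff_deriv.1 h2).2
  by_contra h
  push_neg at h
  have hev : ∀ᶠ x in 𝓝 (0:ℝ), deriv (deriv g) x < 0 :=
    hc2.continuousAt.eventually_lt continuousAt_const h
  rw [Metric.eventually_nhds_iff] at hev
  obtain ⟨δ, hδ, hδ2⟩ := hev
  have hIoo : Ioo (0:ℝ) δ ∈ 𝓝[>] (0:ℝ) := Ioo_mem_nhdsGT_of_mem ⟨le_refl 0, hδ⟩
  obtain ⟨t, ⟨hgt, ht0, htδ⟩⟩ := (hnn.and (eventually_of_mem hIoo fun x hx => hx)).exists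
  obtain ⟨ξ, hξ, hξeq⟩ := exists_hasDerivAt_eq_slope g (deriv g) ht0
    hd1.continuous.continuousOn (fun x _ => (hd1 x).hasDerivAt)
  have hξpos : 0 ≤ deriv g ξ := by
    rw [hξeq, h0, sub_zero, sub_zero]
    positivity
  obtain ⟨η, hη, hηeq⟩ := exists_hasDerivAt_eq_slope (deriv g) (deriv (deriv g)) hξ.1
    hd2.continuous.continuousOn (fun x _ => (hd2 x).hasDerivAt)
  have hηneg : deriv (deriv g) η < 0 := by
    apply hδ2
    simp only [Real.dist_eq, sub_zero]
    rw [abs_of_pos hη.1]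
    exact hη.2.trans (hξ.2.trans htδ)
  rw [hηeq, h1, sub_zero, sub_zero] at hηneg
  have : 0 ≤ deriv g ξ / ξ := div_nonneg hξpos hξ.1.le
  linarith


/- A `C²` submanifold `A` of `ℝⁿ` is represented near `a ∈ A` as the graph of a `C²`
function `f : T → Tᗮ` over its tangent space `T = Tan(A,a)`, normalized so that
`f 0 = 0` and `Df(0) = 0`; under this normalization the second fundamental form of
`A` at `a` is `b_A(a) = D²f(0)`. -/
set_option maxHeartbeats 1000000 in
set_option synthInstance.maxHeartbeats 1000000 in
theorem stmt17 {n m : ℕ} (A : Set (EuclideanSpace ℝ (Fin n)))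
    (a : EuclideanSpace ℝ (Fin n)) (haA : a ∈ A)
    (T : Submodule ℝ (EuclideanSpace ℝ (Fin n))) (hT : Module.finrank ℝ T = m)
    (f : T → Tᗮ) (hf : ContDiff ℝ 2 f) (hf0 : f 0 = 0) (hDf0 : fderiv ℝ f 0 = 0)
    (U : Set (EuclideanSpace ℝ (Fin n))) (hU : IsOpen U) (haU : a ∈ U)
    (hgraph : A ∩ U = {x ∈ U | ∃ χ : T, x = a + (χ : EuclideanSpace ℝ (Fin n)) +
      (f χ : EuclideanSpace ℝ (Fin n))})
    (ν : EuclideanSpace ℝ (Fin n)) (hν : ‖ν‖ = 1) (hνnor : ν ∈ Tᗮ)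
    (r : ℝ) (hr : 0 < r)
    (hball : Metric.ball (a + r • ν) r ∩ A = ∅) :
    ∀ v : T, ⟪((iteratedFDeriv ℝ 2 f 0 fun _ => v : Tᗮ) : EuclideanSpace ℝ (Fin n)), ν⟫ ≤
      r⁻¹ * ‖v‖ ^ 2 := by
  intro v
  set L : ℝ →L[ℝ] T := ContinuousLinearMap.toSpanSingleton ℝ v with hL
  have hLapp : ∀ t : ℝ, L t = t • v := fun t => rfl
  set F : ℝ → Tᗮ := fun t => f (t • v) with hFdef
  have hFL : F = f ∘ L := rfl
  have hFc : ContDiff ℝ 2 F := hf.comp L.contDiff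
  set F' : ℝ → Tᗮ := fun t => fderiv ℝ f (t • v) v with hF'def
  have hfd : Differentiable ℝ f := hf.differentiable (by norm_num)
  have hFd : ∀ t, HasDerivAt F (F' t) t := by
    intro t
    have h1 : HasDerivAt (fun s : ℝ => s • v) v t := by
      simpa using (hasDerivAt_id t).smul_const v
    exact (hfd (t • v)).hasFDerivAt.comp_hasDerivAt t h1
  have hF'c : ContDiff ℝ 1 F' := by
    have h1 : ContDiff ℝ 1 (fderiv ℝ f) := hf.fderiv_right (by norm_num)
    exact (ContinuousLinearMap.apply ℝ Tᗮ v).contDiff.comp (h1.comp L.contDiff)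
  set B : Tᗮ := (iteratedFDeriv ℝ 2 f 0 fun _ => v : Tᗮ) with hB
  have hF'B : deriv F' 0 = B := by
    have hFF' : deriv F = F' := funext fun t => (hFd t).deriv
    have h2 : deriv F' 0 = iteratedDeriv 2 F 0 := by
      rw [iteratedDeriv_succ, iteratedDeriv_one, hFF']
    rw [h2, iteratedDeriv_eq_iteratedFDeriv, hFL,
      L.iteratedFDeriv_comp_right hf 0 (by norm_num)]
    simp [hLapp, hB]
  -- ambient versions
  set G : ℝ → EuclideanSpace ℝ (Fin n) := fun t => (F t : EuclideanSpace ℝ (Fin n)) with hGdef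
  set G' : ℝ → EuclideanSpace ℝ (Fin n) := fun t => (F' t : EuclideanSpace ℝ (Fin n)) with hG'def
  have hGc : ContDiff ℝ 2 G := Tᗮ.subtypeL.contDiff.comp hFc
  have hGd : ∀ t, HasDerivAt G (G' t) t := fun t =>
    (Tᗮ.subtypeL.hasFDerivAt).comp_hasDerivAt t (hFd t)
  have hG'd : HasDerivAt G' ((B : EuclideanSpace ℝ (Fin n))) 0 := by
    have h1 : HasDerivAt F' (deriv F' 0) 0 := ((hF'c.differentiable one_ne_zero) 0).hasDerivAt
    rw [hF'B] at h1
    exact (Tᗮ.subtypeL.hasFDerivAt).comp_hasDerivAt 0 h1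
  have hG0 : G 0 = 0 := by
    simp only [hGdef, hFdef, zero_smul, hf0, ZeroMemClass.coe_zero]
  have hG'0 : G' 0 = 0 := by
    simp only [hG'def, hF'def, zero_smul, hDf0, ContinuousLinearMap.zero_apply,
      ZeroMemClass.coe_zero]
  -- the scalar function
  set g : ℝ → ℝ := fun t => (2 * r)⁻¹ * (t ^ 2 * ‖v‖ ^ 2 + ⟪G t, G t⟫) - ⟪G t, ν⟫ with hgdef
  set g' : ℝ → ℝ := fun t =>
    (2 * r)⁻¹ * (2 * t * ‖v‖ ^ 2 + 2 * ⟪G' t, G t⟫) - ⟪G' t, ν⟫ with hg'def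
  have hgc : ContDiff ℝ 2 g :=
    ((contDiff_const.mul (((contDiff_id.pow 2).mul contDiff_const).add
      (hGc.inner ℝ hGc))).sub (hGc.inner ℝ contDiff_const))
  have hgd : ∀ t, HasDerivAt g (g' t) t := by
    intro t
    have h1 := ((((hasDerivAt_pow 2 t).mul_const (‖v‖ ^ 2)).add
      ((hGd t).inner ℝ (hGd t))).const_mul ((2 * r)⁻¹)).sub
      ((hGd t).inner ℝ (hasDerivAt_const t ν))
    refine h1.congr_deriv ?_
    symm
    simp only [hg'def, pow_one, inner_zero_right, zero_add,
      real_inner_comm (G t) (G' t)]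
    ring
  have hderivg : deriv g = g' := funext fun t => (hgd t).deriv
  have hg'd : HasDerivAt g' (r⁻¹ * ‖v‖ ^ 2 - ⟪(B : EuclideanSpace ℝ (Fin n)), ν⟫) 0 := by
    have h1 := ((((hasDerivAt_id (0:ℝ)).const_mul 2).mul_const (‖v‖ ^ 2)).add
      ((hG'd.inner ℝ (hGd 0)).const_mul 2)).const_mul ((2 * r)⁻¹) |>.sub
      (hG'd.inner ℝ (hasDerivAt_const 0 ν))
    refine h1.congr_deriv ?_
    symm
    rw [hG0, hG'0]
    simp only [inner_zero_left, inner_zero_right, add_zero, zero_add, mul_zero, mul_one]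
    field_simp
  -- nonnegativity near 0
  have hnn : ∀ᶠ t in 𝓝[>] (0:ℝ), 0 ≤ g t := by
    have hcont : Continuous fun t : ℝ =>
        a + ((t • v : T) : EuclideanSpace ℝ (Fin n)) + (f (t • v) : EuclideanSpace ℝ (Fin n)) := by
      fun_prop
    have hmem : ∀ᶠ t in 𝓝 (0:ℝ),
        a + ((t • v : T) : EuclideanSpace ℝ (Fin n)) + (f (t • v) : EuclideanSpace ℝ (Fin n)) ∈ U := by
      have h0 : (a + (((0:ℝ) • v : T) : EuclideanSpace ℝ (Fin n)) +
          (f ((0:ℝ) • v) : EuclideanSpace ℝ (Fin n))) = a := by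
        simp [hf0]
      exact hcont.continuousAt.eventually_mem (by rw [h0]; exact hU.mem_nhds haU)
    filter_upwards [eventually_nhdsWithin_of_eventually_nhds hmem] with t hmemt
    set p : EuclideanSpace ℝ (Fin n) :=
      a + ((t • v : T) : EuclideanSpace ℝ (Fin n)) + (f (t • v) : EuclideanSpace ℝ (Fin n)) with hp
    have hpA : p ∈ A := by
      have hmem2 : p ∈ A ∩ U := by
        rw [hgraph]; exact ⟨hmemt, t • v, rfl⟩
      exact hmem2.1
    have hpball : p ∉ Metric.ball (a + r • ν) r := by
      intro hmemb
      have h3 : p ∈ Metric.ball (a + r • ν) r ∩ A := ⟨hmemb, hpA⟩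
      rw [hball] at h3
      exact h3
    rw [Metric.mem_ball, not_lt, dist_eq_norm] at hpball
    have hsub : p - (a + r • ν) = t • (v : EuclideanSpace ℝ (Fin n)) + G t - r • ν := by
      rw [hp, hGdef]
      push_cast
      abel
    rw [hsub] at hpball
    have hvG : ⟪(v : EuclideanSpace ℝ (Fin n)), G t⟫ = 0 :=
      Submodule.inner_right_of_mem_orthogonal v.2 (F t).2
    have hvν : ⟪(v : EuclideanSpace ℝ (Fin n)), ν⟫ = 0 :=
      Submodule.inner_right_of_mem_orthogonal v.2 hνnor
    have h1 : ‖t • (v : EuclideanSpace ℝ (Fin n))‖ ^ 2 = t ^ 2 * ‖v‖ ^ 2 := by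
      rw [norm_smul]
      have hc : ‖(v : EuclideanSpace ℝ (Fin n))‖ = ‖v‖ := rfl
      rw [hc, mul_pow, Real.norm_eq_abs, sq_abs]
    have h2 : ‖G t‖ ^ 2 = ⟪G t, G t⟫ := (real_inner_self_eq_norm_sq _).symm
    have h3 : ‖r • ν‖ ^ 2 = r ^ 2 := by
      rw [norm_smul, hν, mul_one, Real.norm_eq_abs, sq_abs]
    have hexp : ‖t • (v : EuclideanSpace ℝ (Fin n)) + G t - r • ν‖ ^ 2
        = t ^ 2 * ‖v‖ ^ 2 + ⟪G t, G t⟫ - 2 * r * ⟪G t, ν⟫ + r ^ 2 := by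
      rw [norm_sub_sq_real, norm_add_sq_real]
      simp only [inner_add_left, real_inner_smul_left, real_inner_smul_right, hvG, hvν,
        mul_zero, zero_mul, add_zero, zero_add]
      rw [h1, h2, h3]
      ring
    have hN0 : (0:ℝ) ≤ ‖t • (v : EuclideanSpace ℝ (Fin n)) + G t - r • ν‖ := norm_nonneg _
    have hsq : r ^ 2 ≤ ‖t • (v : EuclideanSpace ℝ (Fin n)) + G t - r • ν‖ ^ 2 :=
      pow_le_pow_left₀ hr.le hpball 2
    rw [hexp] at hsq
    have h2r : (0:ℝ) < 2 * r := mul_pos two_pos hr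
    have hkey : 2 * r * ⟪G t, ν⟫ ≤ t ^ 2 * ‖v‖ ^ 2 + ⟪G t, G t⟫ := by linarith only [hsq]
    have hmul := mul_le_mul_of_nonneg_left hkey (inv_nonneg.2 h2r.le)
    rw [← mul_assoc, inv_mul_cancel₀ h2r.ne', one_mul] at hmul
    have hgoal : g t = (2 * r)⁻¹ * (t ^ 2 * ‖v‖ ^ 2 + ⟪G t, G t⟫) - ⟪G t, ν⟫ := rfl
    rw [hgoal]
    exact sub_nonneg.2 hmul
  -- conclude
  have hg0 : g 0 = 0 := by
    have h : g 0 = (2 * r)⁻¹ * (0 ^ 2 * ‖v‖ ^ 2 + ⟪G 0, G 0⟫) - ⟪G 0, ν⟫ := rfl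
    rw [h, hG0, inner_zero_left, inner_zero_left]
    ring
  have hdg0 : deriv g 0 = 0 := by
    have h : deriv g 0 = (2 * r)⁻¹ * (2 * 0 * ‖v‖ ^ 2 + 2 * ⟪G' 0, G 0⟫) - ⟪G' 0, ν⟫ := by
      rw [hderivg]
    rw [h, hG0, hG'0, inner_zero_left, inner_zero_left]
    ring
  have hkey := aux_second_deriv_nonneg hgc hg0 hdg0 hnn
  rw [hderivg, hg'd.deriv] at hkey
  linarith only [hkey]
end
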